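/- arXiv:1710.10163 — 4 statements merged into one kernel-verified Lean document; each statement's English description precedes it below -/
import Mathlib

section
/- Let K be a number field of class number 1, let p be a prime, and let a, b, c ∈ O_K be pairwise coprime nonzero elements with a^p + b^p + c^p = 0. If a prime ideal 𝔮 of O_K divides both 2^4(b^{2p} - a^p c^p) and 2^4 (abc)^{2p}, then 𝔮 divides 2O_K. -/
open NumberField

lemma coprime_not_both_mem {R : Type*} [CommRing R] {x y : R} {𝔮 : Ideal R}
    (h𝔮 : 𝔮.IsPrime) (hco : IsCoprime (Ideal.span {x}) (Ideal.span {y}))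
    (hx : x ∈ 𝔮) (hy : y ∈ 𝔮) : False := by
  have : Ideal.span {x} + Ideal.span {y} = ⊤ := (Ideal.isCoprime_iff_sup_eq.mp hco)
  have hle : Ideal.span {x} + Ideal.span {y} ≤ 𝔮 := by
    apply sup_le <;> rw [Ideal.span_le] <;> simp [hx, hy]
  exact h𝔮.ne_top (top_le_iff.mp (this ▸ hle))

/-- Let `K` be a number field of class number one, `p` a prime, and `a, b, c ∈ 𝓞 K` pairwise
coprime nonzero elements with `aᵖ + bᵖ + cᵖ = 0`. If a prime ideal `𝔮` of `𝓞 K` divides both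
`2⁴(b²ᵖ - aᵖcᵖ)` and `2⁴(abc)²ᵖ`, then `𝔮` divides `2 𝓞 K`. -/
theorem prime_dividing_c4_and_disc_divides_two
    (K : Type*) [Field K] [NumberField K] (hK : NumberField.classNumber K = 1)
    (p : ℕ) (hp : p.Prime)
    (a b c : 𝓞 K) (ha : a ≠ 0) (hb : b ≠ 0) (hc : c ≠ 0)
    (hab : IsCoprime (Ideal.span {a}) (Ideal.span {b}))
    (hbc : IsCoprime (Ideal.span {b}) (Ideal.span {c}))
    (hac : IsCoprime (Ideal.span {a}) (Ideal.span {c}))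
    (hfermat : a ^ p + b ^ p + c ^ p = 0)
    (𝔮 : Ideal (𝓞 K)) (h𝔮 : 𝔮.IsPrime)
    (hc4 : 𝔮 ∣ Ideal.span {2 ^ 4 * (b ^ (2 * p) - a ^ p * c ^ p)})
    (hΔ : 𝔮 ∣ Ideal.span {2 ^ 4 * (a * b * c) ^ (2 * p)}) :
    𝔮 ∣ Ideal.span {(2 : 𝓞 K)} := by
  rw [Ideal.dvd_span_singleton] at hc4 hΔ ⊢
  by_contra h2
  -- 2 ∉ 𝔮, so 2^4 ∉ 𝔮
  have h16 : (2 : 𝓞 K) ^ 4 ∉ 𝔮 := fun h => h2 (h𝔮.mem_of_pow_mem 4 h)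
  have habc : a * b * c ∈ 𝔮 := by
    rcases h𝔮.mem_or_mem hΔ with h | h
    · exact absurd h h16
    · exact h𝔮.mem_of_pow_mem _ h
  have hbd : b ^ (2 * p) - a ^ p * c ^ p ∈ 𝔮 := by
    rcases h𝔮.mem_or_mem hc4 with h | h
    · exact absurd h h16
    · exact h
  rcases h𝔮.mem_or_mem habc with h | hcm
  · rcases h𝔮.mem_or_mem h with ham | hbm
    · -- a ∈ 𝔮 ⇒ b ∈ 𝔮
      have : b ^ (2 * p) ∈ 𝔮 := by
        have : a ^ p * c ^ p ∈ 𝔮 := Ideal.mul_mem_right _ _ (Ideal.pow_mem_of_mem _ ham _ hp.pos)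
        simpa using Ideal.add_mem _ hbd this
      exact coprime_not_both_mem h𝔮 hab ham (h𝔮.mem_of_pow_mem _ this)
    · -- b ∈ 𝔮 ⇒ a^p c^p ∈ 𝔮
      have hb2 : b ^ (2 * p) ∈ 𝔮 := Ideal.pow_mem_of_mem _ hbm _ (Nat.mul_pos two_pos hp.pos)
      have : a ^ p * c ^ p ∈ 𝔮 := by
        have := Ideal.sub_mem _ hb2 hbd
        simpa using this
      rcases h𝔮.mem_or_mem this with h | h
      · exact coprime_not_both_mem h𝔮 hab (h𝔮.mem_of_pow_mem _ h) hbm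
      · exact coprime_not_both_mem h𝔮 hbc hbm (h𝔮.mem_of_pow_mem _ h)
  · -- c ∈ 𝔮 ⇒ b ∈ 𝔮
    have : b ^ (2 * p) ∈ 𝔮 := by
      have : a ^ p * c ^ p ∈ 𝔮 := Ideal.mul_mem_left _ _ (Ideal.pow_mem_of_mem _ hcm _ hp.pos)
      simpa using Ideal.add_mem _ hbd this
    exact coprime_not_both_mem h𝔮 hbc (h𝔮.mem_of_pow_mem _ this) hcm
end

section
/- For K = Q(√-7), the ray class group of modulus 𝔞^2 is trivial for each of the two prime ideals 𝔞 of O_K lying above 2. -/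
open NumberField

/-- Two nonzero integral ideals coprime to the modulus `𝔪` lie in the same ray class if
`(α) * I = (β) * J` for some `α, β ≡ 1 (mod 𝔪)`. -/
def RayEquiv {R : Type*} [CommRing R] (𝔪 I J : Ideal R) : Prop :=
  ∃ α β : R, Ideal.Quotient.mk 𝔪 α = 1 ∧ Ideal.Quotient.mk 𝔪 β = 1 ∧
    Ideal.span {α} * I = Ideal.span {β} * J

section Aux
open Polynomial
variable {K : Type*} [Field K] [NumberField K]

private lemma sq_basis {α : K} (hα : α ^ 2 = -7) (hK : Module.finrank ℚ K = 2) :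
    ∃ b : Module.Basis (Fin 2) ℚ K, ⇑b = ![1, α] := by
  have hne : ∀ q : ℚ, q • α ≠ (1 : K) := by
    intro q h
    have hq : q ≠ 0 := by rintro rfl; simp at h
    have hαe : α = algebraMap ℚ K q⁻¹ := by
      have h1 : (algebraMap ℚ K q) * α = 1 := by rw [← Algebra.smul_def, h]
      rw [map_inv₀]
      exact (inv_eq_of_mul_eq_one_right h1).symm
    have : (q⁻¹ : ℚ) ^ 2 = -7 := by
      have h2 : algebraMap ℚ K (q⁻¹ ^ 2) = algebraMap ℚ K (-7) := by
        rw [map_pow, map_neg, ← hαe, hα]; norm_num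
      exact (algebraMap ℚ K).injective h2
    have := sq_nonneg (q⁻¹ : ℚ)
    nlinarith
  have li : LinearIndependent ℚ ![(1 : K), α] := by
    rw [linearIndependent_fin2]
    constructor
    · intro h; rw [show ((![(1:K), α]) 1) = α from rfl] at h
      apply_fun (· ^ 2) at h; rw [hα] at h; norm_num at h
    · intro q h
      exact hne q (by simpa using h)
  refine ⟨basisOfLinearIndependentOfCardEqFinrank li (by simp [hK]), ?_⟩
  exact coe_basisOfLinearIndependentOfCardEqFinrank _ _



private lemma sq_mulmat {α : K} (hα : α ^ 2 = -7) (b : Module.Basis (Fin 2) ℚ K)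
    (hb : ⇑b = ![1, α]) (r s : ℚ) :
    Algebra.leftMulMatrix b (r • (1:K) + s • α) = !![r, -(7*s); s, r] := by
  have hb0 : b 0 = 1 := by rw [hb]; simp
  have hb1 : b 1 = α := by rw [hb]; simp
  have mul0 : (r • (1:K) + s • α) * b 0 = r • b 0 + s • b 1 := by
    rw [hb0, hb1]; ring
  have mul1 : (r • (1:K) + s • α) * b 1 = (-(7*s)) • b 0 + r • b 1 := by
    rw [hb0, hb1]
    simp only [Algebra.smul_def, map_neg, map_mul, map_ofNat]
    linear_combination (algebraMap ℚ K s) * hα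
  ext i j
  rw [Algebra.leftMulMatrix_eq_repr_mul]
  fin_cases i <;> fin_cases j <;> simp only [Fin.mk_zero, Fin.mk_one, Fin.isValue] <;>
    first
    | (rw [mul0]; simp [map_add, map_smul, Module.Basis.repr_self, Finsupp.single_apply])
    | (rw [mul1]; simp [map_add, map_smul, Module.Basis.repr_self, Finsupp.single_apply])

private lemma sq_norm {α : K} (hα : α ^ 2 = -7) (hK : Module.finrank ℚ K = 2)
    (b : Module.Basis (Fin 2) ℚ K) (hb : ⇑b = ![1, α]) (r s : ℚ) :
    Algebra.norm ℚ (r • (1:K) + s • α) = r^2 + 7 * s^2 := by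
  rw [Algebra.norm_eq_matrix_det b, sq_mulmat hα b hb, Matrix.det_fin_two_of]
  ring

private lemma sq_trace {α : K} (hα : α ^ 2 = -7) (hK : Module.finrank ℚ K = 2)
    (b : Module.Basis (Fin 2) ℚ K) (hb : ⇑b = ![1, α]) (r s : ℚ) :
    Algebra.trace ℚ K (r • (1:K) + s • α) = 2 * r := by
  rw [Algebra.trace_eq_matrix_trace b, sq_mulmat hα b hb, Matrix.trace_fin_two_of]
  ring

private lemma sq_repr (b : Module.Basis (Fin 2) ℚ K) {α : K} (hb : ⇑b = ![1, α]) (x : K) :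
    ∃ r s : ℚ, x = r • (1:K) + s • α := by
  refine ⟨b.repr x 0, b.repr x 1, ?_⟩
  have h := b.sum_repr x
  rw [Fin.sum_univ_two] at h
  conv_lhs => rw [← h]
  rw [show b 0 = 1 by rw [hb]; simp, show b 1 = α by rw [hb]; simp]



private lemma omega_integral {α : K} (hα : α ^ 2 = -7) : IsIntegral ℤ ((1 + α) / 2) := by
  refine ⟨X ^ 2 - X + C 2, ?_, ?_⟩
  · have h : (X ^ 2 - X + C 2 : ℤ[X]) = X ^ 2 + (-X + C 2) := by ring
    rw [h]
    apply monic_X_pow_add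
    refine lt_of_le_of_lt (degree_add_le _ _) ?_
    rw [degree_neg]
    refine max_lt ?_ ?_
    · simpa using (by norm_num : (1 : WithBot ℕ) < 2)
    · refine lt_of_le_of_lt (degree_C_le) ?_
      norm_num
  · have h : eval₂ (algebraMap ℤ K) ((1 + α) / 2) (X ^ 2 - X + C 2) =
        ((1 + α) / 2) ^ 2 - (1 + α) / 2 + 2 := by
      simp [eval₂_add, eval₂_sub, eval₂_pow]
    rw [h]
    linear_combination hα / 4

private lemma alpha_integral {α : K} (hα : α ^ 2 = -7) : IsIntegral ℤ α := by
  refine ⟨X ^ 2 + C 7, ?_, ?_⟩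
  · apply monic_X_pow_add
    refine lt_of_le_of_lt (degree_C_le) ?_
    norm_num
  · have h : eval₂ (algebraMap ℤ K) α (X ^ 2 + C 7) = α ^ 2 + 7 := by
      simp [eval₂_add, eval₂_pow]
    rw [h, hα]; ring

private lemma sq_division {α : K} (hα : α ^ 2 = -7) (hK : Module.finrank ℚ K = 2)
    (ξ : K) : ∃ q : 𝓞 K, |Algebra.norm ℚ (ξ - (q : K))| < 1 := by
  obtain ⟨b, hb⟩ := sq_basis hα hK
  obtain ⟨r, s, rfl⟩ := sq_repr b hb ξ
  set n : ℤ := round (2 * s) with hn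
  set a : ℤ := round (r - (n : ℚ) / 2) with ha
  set ω : 𝓞 K := ⟨(1 + α) / 2, omega_integral hα⟩ with hω
  refine ⟨(a : 𝓞 K) + (n : 𝓞 K) * ω, ?_⟩
  have hq : (((a : 𝓞 K) + (n : 𝓞 K) * ω : 𝓞 K) : K) = (a : K) + (n : K) * ((1 + α) / 2) := by
    push_cast [hω]
    rfl
  rw [hq]
  have key : (r • (1:K) + s • α) - ((a : K) + (n : K) * ((1 + α) / 2)) =
      (r - a - n / 2 : ℚ) • 1 + ((s - n / 2 : ℚ)) • α := by
    simp only [Algebra.smul_def, eq_ratCast]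
    push_cast
    ring
  rw [key, sq_norm hα hK b hb]
  have h1 := abs_le.1 (abs_sub_round (2 * s))
  have h2 := abs_le.1 (abs_sub_round (r - (n : ℚ) / 2))
  rw [← hn] at h1
  rw [← ha] at h2
  rw [abs_of_nonneg (by positivity)]
  obtain ⟨h1a, h1b⟩ := h1
  obtain ⟨h2a, h2b⟩ := h2
  nlinarith [sq_nonneg (r - a - (n:ℚ)/2), sq_nonneg (s - (n:ℚ)/2)]

private lemma int_coords {α : K} (hα : α ^ 2 = -7) (hK : Module.finrank ℚ K = 2)
    (x : 𝓞 K) : ∃ m n : ℤ, (x : K) = (m : K) + (n : K) * ((1 + α) / 2) := by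
  obtain ⟨b, hb⟩ := sq_basis hα hK
  obtain ⟨r, s, hx⟩ := sq_repr b hb (x : K)
  have hxint : IsIntegral ℤ (x : K) := x.2
  obtain ⟨t, ht⟩ := IsIntegrallyClosed.isIntegral_iff.1 (Algebra.isIntegral_trace (L := ℚ) hxint)
  obtain ⟨u, hu⟩ := IsIntegrallyClosed.isIntegral_iff.1
    (Algebra.isIntegral_trace (L := ℚ) (hxint.mul (alpha_integral hα)))
  obtain ⟨N, hN⟩ := IsIntegrallyClosed.isIntegral_iff.1
    (Algebra.isIntegral_norm (R := ℤ) ℚ hxint)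
  have e1 : (t : ℚ) = 2 * r := by
    rw [show ((t : ℚ)) = algebraMap ℤ ℚ t from rfl, ht, hx, sq_trace hα hK b hb]
  have hxα : (x : K) * α = (-(7*s) : ℚ) • (1:K) + r • α := by
    rw [hx]
    simp only [Algebra.smul_def, eq_ratCast]
    push_cast
    linear_combination (s : K) * hα
  have e2 : (u : ℚ) = -(14 * s) := by
    rw [show ((u : ℚ)) = algebraMap ℤ ℚ u from rfl, hu, hxα, sq_trace hα hK b hb]
    ring
  have e3 : (N : ℚ) = r ^ 2 + 7 * s ^ 2 := by
    rw [show ((N : ℚ)) = algebraMap ℤ ℚ N from rfl, hN, hx, sq_norm hα hK b hb]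
  have h7 : (7 : ℤ) ∣ u := by
    have hsq : u ^ 2 = 7 * (4 * N - t ^ 2) := by
      have : ((u : ℚ)) ^ 2 = 7 * (4 * N - t ^ 2) := by
        rw [e1, e2, e3]; ring
      exact_mod_cast this
    have hp : Prime (7 : ℤ) := by norm_num
    exact hp.dvd_of_dvd_pow (n := 2) ⟨4 * N - t ^ 2, hsq⟩
  obtain ⟨n0, hn0⟩ := h7
  set k : ℤ := -n0 with hk
  have hkq : (k : ℚ) = 2 * s := by
    have : (u : ℚ) = 7 * n0 := by exact_mod_cast congrArg (Int.cast (R := ℚ)) hn0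
    push_cast [hk]
    linarith [e2, this]
  have h4N : t ^ 2 + 7 * k ^ 2 = 4 * N := by
    have : ((t : ℚ)) ^ 2 + 7 * k ^ 2 = 4 * N := by rw [e1, hkq, e3]; ring
    exact_mod_cast this
  have hpar : (2 : ℤ) ∣ (t - k) := by
    have heven : Even (t ^ 2 + 7 * k ^ 2) := ⟨2 * N, by linarith⟩
    rcases Int.even_or_odd t with hte | hto
    · rcases Int.even_or_odd k with hke | hko
      · obtain ⟨c, hc⟩ := hte; obtain ⟨d, hd⟩ := hke; exact ⟨c - d, by omega⟩
      · exfalso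
        obtain ⟨c, hc⟩ := hte; obtain ⟨d, hd⟩ := hko
        obtain ⟨e, he⟩ := heven
        have : t ^ 2 + 7 * k ^ 2 = 2 * (2 * c ^ 2 + 14 * d ^ 2 + 14 * d + 3) + 1 := by
          rw [hc, hd]; ring
        omega
    · rcases Int.even_or_odd k with hke | hko
      · exfalso
        obtain ⟨c, hc⟩ := hto; obtain ⟨d, hd⟩ := hke
        obtain ⟨e, he⟩ := heven
        have : t ^ 2 + 7 * k ^ 2 = 2 * (2 * c ^ 2 + 2 * c + 14 * d ^ 2) + 1 := by
          rw [hc, hd]; ring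
        omega
      · obtain ⟨c, hc⟩ := hto; obtain ⟨d, hd⟩ := hko; exact ⟨c - d, by omega⟩
  obtain ⟨m, hm⟩ := hpar
  refine ⟨m, k, ?_⟩
  rw [hx]
  have hr : r = (t : ℚ) / 2 := by linarith
  have hs : s = (k : ℚ) / 2 := by linarith [hkq]
  rw [hr, hs]
  simp only [Algebra.smul_def, eq_ratCast]
  push_cast
  have hmK : (t : K) - k = 2 * m := by exact_mod_cast congrArg (Int.cast (R := K)) hm
  linear_combination hmK / 2

private lemma principal_of_ne_bot {α : K} (hα : α ^ 2 = -7) (hK : Module.finrank ℚ K = 2)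
    (I : Ideal (𝓞 K)) (hI : I ≠ 0) : ∃ γ : 𝓞 K, γ ∈ I ∧ I = Ideal.span {γ} := by
  obtain ⟨x₀, hx₀I, hx₀⟩ := Submodule.exists_mem_ne_zero_of_ne_bot hI
  set S : Set ℕ := {n | ∃ x : 𝓞 K, x ∈ I ∧ x ≠ 0 ∧ (Algebra.norm ℤ x).natAbs = n} with hSdef
  have hS : S.Nonempty := ⟨(Algebra.norm ℤ x₀).natAbs, x₀, hx₀I, hx₀, rfl⟩
  obtain ⟨γ, hγI, hγ0, hγn⟩ := Nat.sInf_mem hS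
  refine ⟨γ, hγI, le_antisymm ?_ (Ideal.span_le.2 (by simpa using hγI))⟩
  intro x hx
  have hγK : (γ : K) ≠ 0 := by
    simpa using (map_ne_zero_iff _ RingOfIntegers.coe_injective).2 hγ0
  obtain ⟨q, hq⟩ := sq_division hα hK ((x : K) / (γ : K))
  set z : 𝓞 K := x - q * γ with hzdef
  have hzI : z ∈ I := I.sub_mem hx (I.mul_mem_left q hγI)
  have hzK : (z : K) = ((x : K) / (γ : K) - (q : K)) * (γ : K) := by
    have : (z : K) = (x : K) - (q : K) * (γ : K) := by
      rw [hzdef]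
      push_cast
      rfl
    rw [this]
    field_simp
  have hNγ : Algebra.norm ℚ ((γ : K)) ≠ 0 := by
    rw [Algebra.norm_ne_zero_iff]
    exact hγK
  have key : |(Algebra.norm ℤ z : ℚ)| < |(Algebra.norm ℤ γ : ℚ)| := by
    rw [Algebra.coe_norm_int, Algebra.coe_norm_int, hzK, map_mul, abs_mul]
    calc |Algebra.norm ℚ ((x : K) / (γ : K) - (q : K))| * |Algebra.norm ℚ ((γ : K))|
        < 1 * |Algebra.norm ℚ ((γ : K))| := by
          exact mul_lt_mul_of_pos_right hq (abs_pos.2 hNγ)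
      _ = |Algebra.norm ℚ ((γ : K))| := one_mul _
  have hlt : (Algebra.norm ℤ z).natAbs < (Algebra.norm ℤ γ).natAbs := by
    have h1 : ((Algebra.norm ℤ z).natAbs : ℚ) < ((Algebra.norm ℤ γ).natAbs : ℚ) := by
      rw [Nat.cast_natAbs, Nat.cast_natAbs]
      push_cast
      exact key
    exact_mod_cast h1
  have hz0 : z = 0 := by
    by_contra hz
    have : (Algebra.norm ℤ z).natAbs ∈ S := ⟨z, hzI, hz, rfl⟩
    have := Nat.sInf_le this
    omega
  have : x = γ * q := by
    have : x - q * γ = 0 := hz0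
    rw [sub_eq_zero] at this
    rw [this]; ring
  exact Ideal.mem_span_singleton.2 ⟨q, this⟩

end Aux


set_option maxHeartbeats 1000000 in
set_option synthInstance.maxHeartbeats 400000 in
/-- For `K = ℚ(√-7)`, the ray class group of modulus `𝔞²` is trivial for each of the two
prime ideals `𝔞` of `𝓞 K` lying above `2`: every nonzero ideal coprime to `𝔞²` is principal,
generated by an element congruent to `1 mod 𝔞²`. -/
theorem rayClassGroup_trivial_sqrt_neg_seven
    (K : Type*) [Field K] [NumberField K] (α : K) (hα : α ^ 2 = -7)
    (hK : Module.finrank ℚ K = 2)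
    (𝔞 : Ideal (𝓞 K)) (h𝔞 : 𝔞.IsPrime) (h𝔞2 : 𝔞 ∣ Ideal.span {(2 : 𝓞 K)})
    (I : Ideal (𝓞 K)) (hI : I ≠ 0) (hcop : IsCoprime I (𝔞 ^ 2)) :
    ∃ β : 𝓞 K, I = Ideal.span {β} ∧ Ideal.Quotient.mk (𝔞 ^ 2) β = 1 := by
  obtain ⟨γ, hγI, hIspan⟩ := principal_of_ne_bot hα hK I hI
  set ω : 𝓞 K := ⟨(1 + α) / 2, omega_integral hα⟩ with hωdef
  have hωK : (ω : K) = (1 + α) / 2 := rfl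
  have hω2 : ω ^ 2 = ω - 2 := by
    apply RingOfIntegers.ext
    show algebraMap (𝓞 K) K (ω ^ 2) = algebraMap (𝓞 K) K (ω - 2)
    rw [map_pow, map_sub, map_ofNat]
    rw [show algebraMap (𝓞 K) K ω = (1 + α) / 2 from rfl]
    linear_combination hα / 4
  have hmul2 : ω * (1 - ω) = 2 := by
    apply RingOfIntegers.ext
    show algebraMap (𝓞 K) K (ω * (1 - ω)) = algebraMap (𝓞 K) K 2
    rw [map_mul, map_sub, map_one, map_ofNat]
    rw [show algebraMap (𝓞 K) K ω = (1 + α) / 2 from rfl]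
    linear_combination -hα / 4
  have h2mem : (2 : 𝓞 K) ∈ 𝔞 := Ideal.le_of_dvd h𝔞2 (Ideal.mem_span_singleton_self 2)
  have hprime := h𝔞.mem_or_mem (show ω * (1 - ω) ∈ 𝔞 by rw [hmul2]; exact h2mem)
  -- in both cases, get g ∈ 𝔞 with g ^ 2 = g - 2, and a constant c with ω ≡ c mod 𝔞²
  set Q := Ideal.Quotient.mk (𝔞 ^ 2) with hQdef
  obtain ⟨g, hgmem, hgsq⟩ : ∃ g : 𝓞 K, g ∈ 𝔞 ∧ g ^ 2 = g - 2 := by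
    rcases hprime with hg | hg
    · exact ⟨ω, hg, hω2⟩
    · exact ⟨1 - ω, hg, by linear_combination hω2⟩
  have hg2 : g - 2 ∈ 𝔞 ^ 2 := by rw [← hgsq]; exact Ideal.pow_mem_pow hgmem 2
  have h4 : (4 : 𝓞 K) ∈ 𝔞 ^ 2 := by
    have hneg : (2 : 𝓞 K) - g ∈ 𝔞 ^ 2 := by
      have := (𝔞 ^ 2).neg_mem hg2
      simpa using this
    have h1 : ((2 : 𝓞 K) - g) * (2 + g) ∈ 𝔞 ^ 2 := Ideal.mul_mem_right _ _ hneg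
    have hgg : g ^ 2 ∈ 𝔞 ^ 2 := by rw [hgsq]; exact hg2
    have h44 : (4 : 𝓞 K) = (2 - g) * (2 + g) + g ^ 2 := by ring
    rw [h44]; exact Ideal.add_mem _ h1 hgg
  obtain ⟨c, hcω⟩ : ∃ c : ℤ, Q ω = Q ((c : ℤ) : 𝓞 K) := by
    rcases hprime with hg | hg
    · refine ⟨2, ?_⟩
      rw [hQdef, Ideal.Quotient.eq]
      have : ω - ((2 : ℤ) : 𝓞 K) = ω - 2 := by push_cast; ring
      rw [this, ← hω2]
      exact Ideal.pow_mem_pow hg 2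
    · refine ⟨-1, ?_⟩
      rw [hQdef, Ideal.Quotient.eq]
      have h12 : (1 - ω) - 2 ∈ 𝔞 ^ 2 := by
        have : (1 - ω) - 2 = (1 - ω) ^ 2 := by linear_combination -hω2
        rw [this]
        exact Ideal.pow_mem_pow hg 2
      have : ω - ((-1 : ℤ) : 𝓞 K) = -(((1 - ω) - 2)) := by push_cast; ring
      rw [this]
      exact (𝔞 ^ 2).neg_mem h12
  obtain ⟨m, n, hmn⟩ := int_coords hα hK γ
  have hγeq : γ = (m : 𝓞 K) + (n : 𝓞 K) * ω := by
    apply RingOfIntegers.ext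
    show algebraMap (𝓞 K) K γ = algebraMap (𝓞 K) K ((m : 𝓞 K) + (n : 𝓞 K) * ω)
    rw [map_add, map_mul, map_intCast, map_intCast,
      show algebraMap (𝓞 K) K ω = (1 + α) / 2 from rfl]
    exact hmn
  set k : ℤ := m + n * c with hkdef
  have hQγ : Q γ = Q ((k : ℤ) : 𝓞 K) := by
    rw [hγeq, map_add, map_mul, hcω, hkdef]
    push_cast
    rw [map_add, map_mul]
  have hodd : ¬ (2 : ℤ) ∣ k := by
    rintro ⟨j, hj⟩
    have h1 : γ - ((k : ℤ) : 𝓞 K) ∈ 𝔞 ^ 2 := by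
      rw [hQdef, Ideal.Quotient.eq] at hQγ
      exact hQγ
    have hsub : 𝔞 ^ 2 ≤ 𝔞 := Ideal.pow_le_self two_ne_zero
    have hk𝔞 : ((k : ℤ) : 𝓞 K) ∈ 𝔞 := by
      have : ((k : ℤ) : 𝓞 K) = 2 * ((j : ℤ) : 𝓞 K) := by rw [hj]; push_cast; ring
      rw [this]
      exact Ideal.mul_mem_right _ _ h2mem
    have hγ𝔞 : γ ∈ 𝔞 := by
      have := Ideal.add_mem 𝔞 (hsub h1) hk𝔞
      simpa using this
    have hsup : Ideal.span {γ} ⊔ 𝔞 ^ 2 = ⊤ := by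
      rw [← hIspan]
      exact (Ideal.isCoprime_iff_sup_eq).1 hcop
    have hle : Ideal.span {γ} ⊔ 𝔞 ^ 2 ≤ 𝔞 :=
      sup_le (Ideal.span_le.2 (by simpa using hγ𝔞)) hsub
    rw [hsup] at hle
    exact h𝔞.ne_top (top_le_iff.1 hle)
  have hQmod : Q ((k : ℤ) : 𝓞 K) = Q (((k % 4 : ℤ)) : 𝓞 K) := by
    rw [hQdef, Ideal.Quotient.eq]
    have : ((k : ℤ) : 𝓞 K) - ((k % 4 : ℤ) : 𝓞 K) = 4 * (((k / 4 : ℤ)) : 𝓞 K) := by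
      have h' : (k : ℤ) - (k % 4) = 4 * (k / 4) := by omega
      have := congrArg (Int.cast (R := 𝓞 K)) h'
      push_cast at this
      push_cast
      linear_combination this
    rw [this]
    exact Ideal.mul_mem_right _ _ h4
  have hk4 : k % 4 = 1 ∨ k % 4 = 3 := by omega
  rcases hk4 with h | h
  · refine ⟨γ, hIspan, ?_⟩
    have : Q γ = Q 1 := by rw [hQγ, hQmod, h]; norm_num
    rw [hQdef] at this
    simpa using this
  · refine ⟨-γ, by rw [hIspan, ← Ideal.span_singleton_neg], ?_⟩
    have : Q (-γ) = Q 1 := by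
      rw [map_neg, hQγ, hQmod, h, hQdef, ← map_neg, Ideal.Quotient.eq]
      have : -(((3 : ℤ) : 𝓞 K)) - 1 = -4 := by push_cast; ring
      rw [this]
      exact (𝔞 ^ 2).neg_mem h4
    rw [hQdef] at this
    simpa using this
end

section
/- For K = Q(i) with 𝔞 the unique prime above 2, the ray class group of modulus 𝔞^4 is isomorphic to Z/2Z; for K = Q(√-2) with 𝔞 the unique prime above 2, the ray class group of modulus 𝔞^4 is isomorphic to Z/4Z. -/
open NumberField

/-- The ray class group of modulus `𝔪` of a number field `K` is isomorphic to `ℤ/nℤ`: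
there is a labelling of the nonzero ideals coprime to `𝔪` by `ℤ/nℤ` which is surjective,
additive on products, and whose fibres are exactly the ray classes. -/
def RayClassGroupIsoZMod (K : Type*) [Field K] [NumberField K] (𝔪 : Ideal (𝓞 K))
    (n : ℕ) : Prop :=
  ∃ f : {I : Ideal (𝓞 K) // I ≠ 0 ∧ IsCoprime I 𝔪} → ZMod n,
    Function.Surjective f ∧
    (∀ I J : {I : Ideal (𝓞 K) // I ≠ 0 ∧ IsCoprime I 𝔪},
      f ⟨I.1 * J.1, mul_ne_zero I.2.1 J.2.1, I.2.2.mul_left J.2.2⟩ = f I + f J) ∧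
    (∀ I J : {I : Ideal (𝓞 K) // I ≠ 0 ∧ IsCoprime I 𝔪},
      (f I = f J ↔ RayEquiv 𝔪 I.1 J.1))


section ZsqrtdAux
open Zsqrtd

theorem zsqrtd_approx {d : ℤ} (hd2 : -2 ≤ d) (hd0 : d < 0) (x y : ℤ√d) (hy : y ≠ 0) :
    ∃ q : ℤ√d, (x - q * y).norm.natAbs < y.norm.natAbs := by
  set n : ℤ := y.norm with hn
  have npos : 0 < n := lt_of_le_of_ne (Zsqrtd.norm_nonneg hd0.le y)
    (fun h => hy ((Zsqrtd.norm_eq_zero_iff hd0 y).mp h.symm))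
  set c : ℤ√d := x * star y with hc
  set qr : ℤ := round ((c.re : ℚ) / (n : ℚ)) with hqr
  set qi : ℤ := round ((c.im : ℚ) / (n : ℚ)) with hqi
  refine ⟨⟨qr, qi⟩, ?_⟩
  set z : ℤ√d := x - ⟨qr, qi⟩ * y with hz
  have hmulc : z * star y = c - ⟨qr, qi⟩ * (n : ℤ√d) := by
    rw [hz, sub_mul, hc, mul_assoc, ← Zsqrtd.norm_eq_mul_conj]
  have hkey : z.norm * n = (c.re - qr * n) ^ 2 - d * (c.im - qi * n) ^ 2 := by
    have h1 : z.norm * n = (z * star y).norm := by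
      rw [Zsqrtd.norm_mul, Zsqrtd.norm_conj]
    rw [h1, hmulc]
    simp [Zsqrtd.norm_def, Zsqrtd.ext_iff]
    ring
  have hA : |(c.re : ℚ) - qr * n| ≤ (n : ℚ) / 2 := by
    have h := abs_sub_round ((c.re : ℚ) / (n : ℚ))
    have hn0 : (0:ℚ) < (n:ℚ) := by exact_mod_cast npos
    have : |(c.re : ℚ) / n - qr| * n ≤ 1 / 2 * n := by
      exact mul_le_mul_of_nonneg_right h hn0.le
    have heq : ((c.re : ℚ) / n - qr) * n = (c.re : ℚ) - qr * n := by field_simp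
    calc |(c.re : ℚ) - qr * n| = |(c.re : ℚ) / n - qr| * n := by
          rw [← heq, abs_mul, abs_of_pos hn0]
      _ ≤ 1 / 2 * n := this
      _ = (n:ℚ)/2 := by ring
  have hB : |(c.im : ℚ) - qi * n| ≤ (n : ℚ) / 2 := by
    have h := abs_sub_round ((c.im : ℚ) / (n : ℚ))
    have hn0 : (0:ℚ) < (n:ℚ) := by exact_mod_cast npos
    have : |(c.im : ℚ) / n - qi| * n ≤ 1 / 2 * n := by
      exact mul_le_mul_of_nonneg_right h hn0.le
    have heq : ((c.im : ℚ) / n - qi) * n = (c.im : ℚ) - qi * n := by field_simp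
    calc |(c.im : ℚ) - qi * n| = |(c.im : ℚ) / n - qi| * n := by
          rw [← heq, abs_mul, abs_of_pos hn0]
      _ ≤ 1 / 2 * n := this
      _ = (n:ℚ)/2 := by ring
  have hlt : z.norm < n := by
    have hn0 : (0:ℚ) < (n:ℚ) := by exact_mod_cast npos
    have hkeyQ : (z.norm : ℚ) * n = ((c.re:ℚ) - qr * n) ^ 2 - d * ((c.im:ℚ) - qi * n) ^ 2 := by
      exact_mod_cast congrArg (fun t : ℤ => (t : ℚ)) hkey
    have h1 : ((c.re:ℚ) - qr * n)^2 ≤ ((n:ℚ)/2)^2 := by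
      have := sq_le_sq' (neg_le_of_abs_le hA) (le_of_abs_le hA)
      simpa using this
    have h2 : ((c.im:ℚ) - qi * n)^2 ≤ ((n:ℚ)/2)^2 := by
      have := sq_le_sq' (neg_le_of_abs_le hB) (le_of_abs_le hB)
      simpa using this
    have hd2' : (-2 : ℚ) ≤ (d:ℚ) := by exact_mod_cast hd2
    have hd0' : ((d:ℚ)) < 0 := by exact_mod_cast hd0
    have hQ : (z.norm : ℚ) * n < n * n := by
      nlinarith [sq_nonneg ((c.im:ℚ) - qi * n), sq_nonneg ((c.re:ℚ) - qr * n)]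
    have : (z.norm : ℚ) < n := lt_of_mul_lt_mul_right hQ hn0.le
    exact_mod_cast this
  have hz0 : 0 ≤ z.norm := Zsqrtd.norm_nonneg hd0.le z
  omega

theorem zsqrtd_pid {d : ℤ} (hd2 : -2 ≤ d) (hd0 : d < 0) : IsPrincipalIdealRing (ℤ√d) := by
  constructor
  intro I
  by_cases hI : I = ⊥
  · exact hI ▸ ⟨0, Ideal.span_zero.symm⟩
  · obtain ⟨y0, hy0I, hy00⟩ := Submodule.exists_mem_ne_zero_of_ne_bot hI
    obtain ⟨k, hkS, hmin⟩ := wellFounded_lt.has_min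
      {k : ℕ | ∃ y, y ∈ I ∧ y ≠ 0 ∧ y.norm.natAbs = k} ⟨_, y0, hy0I, hy00, rfl⟩
    obtain ⟨y, hyI, hy0, rfl⟩ := hkS
    refine ⟨y, le_antisymm ?_ ?_⟩
    · intro x hx
      obtain ⟨q, hq⟩ := zsqrtd_approx hd2 hd0 x y hy0
      have hrI : x - q * y ∈ I := I.sub_mem hx (I.mul_mem_left q hyI)
      have hr0 : x - q * y = 0 := by
        by_contra h0
        exact hmin _ ⟨_, hrI, h0, rfl⟩ hq
      rw [Ideal.submodule_span_eq, Ideal.mem_span_singleton']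
      exact ⟨q, by linear_combination -hr0⟩
    · rw [Ideal.submodule_span_eq, Ideal.span_le, Set.singleton_subset_iff]
      exact hyI

end ZsqrtdAux

set_option linter.unusedSectionVars false

/-- `x` is invertible modulo `𝔪`. -/
def URes {R : Type*} [CommRing R] (𝔪 : Ideal R) (x : R) : Prop :=
  ∃ y, Ideal.Quotient.mk 𝔪 (x * y) = 1

section Abstract
variable {R : Type*} [CommRing R] [IsDomain R] [IsPrincipalIdealRing R] {𝔪 : Ideal R}

theorem mk_eq_one_iff {x : R} : Ideal.Quotient.mk 𝔪 x = 1 ↔ x - 1 ∈ 𝔪 := by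
  rw [show (1 : R ⧸ 𝔪) = Ideal.Quotient.mk 𝔪 1 from (map_one _).symm, Ideal.Quotient.eq]

theorem URes.unit (u : Rˣ) : URes 𝔪 (u : R) :=
  ⟨(u⁻¹ : Rˣ), by rw [Units.mul_inv]; exact map_one _⟩

theorem URes.of_mk_eq_one {x : R} (h : Ideal.Quotient.mk 𝔪 x = 1) : URes 𝔪 x :=
  ⟨1, by rwa [mul_one]⟩

theorem URes.mul {x y : R} (hx : URes 𝔪 x) (hy : URes 𝔪 y) : URes 𝔪 (x * y) := by
  obtain ⟨a, ha⟩ := hx; obtain ⟨b, hb⟩ := hy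
  exact ⟨a * b, by rw [show x * y * (a * b) = (x * a) * (y * b) by ring, map_mul, ha, hb, one_mul]⟩

theorem URes.coprime {I : Ideal R} (h : IsCoprime I 𝔪) {x : R} (hx : Ideal.span {x} = I) :
    URes 𝔪 x := by
  rw [Ideal.isCoprime_iff_sup_eq] at h
  have h1 : (1 : R) ∈ I ⊔ 𝔪 := h ▸ Submodule.mem_top
  obtain ⟨a, haI, b, hb𝔪, hab⟩ := Submodule.mem_sup.mp h1
  rw [← hx, Ideal.mem_span_singleton'] at haI
  obtain ⟨c, hc⟩ := haI
  refine ⟨c, mk_eq_one_iff.mpr ?_⟩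
  have : x * c - 1 = -b := by linear_combination hc + hab
  rw [this]
  exact neg_mem hb𝔪

theorem URes.coprime_span {x : R} (h : URes 𝔪 x) : IsCoprime (Ideal.span {x}) 𝔪 := by
  obtain ⟨y, hy⟩ := h
  rw [mk_eq_one_iff] at hy
  rw [Ideal.isCoprime_iff_sup_eq, Ideal.eq_top_iff_one]
  have h1 : (1 : R) = x * y - (x * y - 1) := by ring
  rw [h1]
  exact Submodule.sub_mem _ (Ideal.mem_sup_left (Ideal.mem_span_singleton'.mpr ⟨y, mul_comm y x⟩))
    (Ideal.mem_sup_right hy)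

variable (h𝔪 : 𝔪 ≠ ⊤) {n : ℕ} {g : R → ZMod n}
  (hg0 : ∀ x y : R, Ideal.Quotient.mk 𝔪 x = Ideal.Quotient.mk 𝔪 y → g x = g y)
  (hmul : ∀ x y : R, URes 𝔪 x → URes 𝔪 y → g (x * y) = g x + g y)
  (hunit : ∀ u : Rˣ, g (u : R) = 0)

section
include hmul hunit

theorem g_assoc {x y : R} (hx : URes 𝔪 x) (hy : URes 𝔪 y) (h : Associated x y) :
    g x = g y := by
  obtain ⟨u, hu⟩ := h
  rw [← hu, hmul x u hx (URes.unit u), hunit, add_zero]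

end

/-- generator of an ideal in the subtype -/
noncomputable abbrev genOf (I : {I : Ideal R // I ≠ 0 ∧ IsCoprime I 𝔪}) : R :=
  Submodule.IsPrincipal.generator I.1

theorem genOf_span (I : {I : Ideal R // I ≠ 0 ∧ IsCoprime I 𝔪}) :
    Ideal.span {genOf I} = I.1 := Ideal.span_singleton_generator I.1

theorem genOf_ures (I : {I : Ideal R // I ≠ 0 ∧ IsCoprime I 𝔪}) : URes 𝔪 (genOf I) :=
  URes.coprime I.2.2 (genOf_span I)

include h𝔪 hg0 hmul hunit in
theorem ray_abstract
    (hsurj : ∀ c : ZMod n, ∃ x, URes 𝔪 x ∧ g x = c)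
    (hker : ∀ x y : R, URes 𝔪 x → URes 𝔪 y → g x = g y →
      ∃ u : Rˣ, Ideal.Quotient.mk 𝔪 x = Ideal.Quotient.mk 𝔪 ((u : R) * y)) :
    ∃ f : {I : Ideal R // I ≠ 0 ∧ IsCoprime I 𝔪} → ZMod n,
      Function.Surjective f ∧
      (∀ I J : {I : Ideal R // I ≠ 0 ∧ IsCoprime I 𝔪},
        f ⟨I.1 * J.1, mul_ne_zero I.2.1 J.2.1, I.2.2.mul_left J.2.2⟩ = f I + f J) ∧
      (∀ I J : {I : Ideal R // I ≠ 0 ∧ IsCoprime I 𝔪},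
        (f I = f J ↔ RayEquiv 𝔪 I.1 J.1)) := by
  refine ⟨fun I => g (genOf I), ?_, ?_, ?_⟩
  · -- surjective
    intro c
    obtain ⟨x, hxU, hxg⟩ := hsurj c
    have hx0 : x ≠ 0 := by
      rintro rfl
      obtain ⟨y, hy⟩ := hxU
      rw [zero_mul, mk_eq_one_iff] at hy
      apply h𝔪
      rw [Ideal.eq_top_iff_one]
      simpa using neg_mem hy
    have hne : Ideal.span {x} ≠ (0 : Ideal R) := by
      simpa [Ideal.span_singleton_eq_bot] using hx0
    set Ix : {I : Ideal R // I ≠ 0 ∧ IsCoprime I 𝔪} := ⟨Ideal.span {x}, hne, hxU.coprime_span⟩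
    refine ⟨Ix, ?_⟩
    have hassoc : Associated (genOf Ix) x := by
      rw [← Ideal.span_singleton_eq_span_singleton, genOf_span]
    show g (genOf Ix) = c
    rw [← hxg]
    exact g_assoc hmul hunit (genOf_ures _) hxU hassoc
  · -- additive
    intro I J
    set IJ : {I : Ideal R // I ≠ 0 ∧ IsCoprime I 𝔪} :=
      ⟨I.1 * J.1, mul_ne_zero I.2.1 J.2.1, I.2.2.mul_left J.2.2⟩ with hIJ
    have hassoc : Associated (genOf IJ) (genOf I * genOf J) := by
      rw [← Ideal.span_singleton_eq_span_singleton, genOf_span,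
        ← Ideal.span_singleton_mul_span_singleton, genOf_span, genOf_span]
    have h3 := g_assoc (𝔪 := 𝔪) hmul hunit (genOf_ures IJ)
      ((genOf_ures I).mul (genOf_ures J)) hassoc
    show g (genOf IJ) = g (genOf I) + g (genOf J)
    rw [h3, hmul _ _ (genOf_ures I) (genOf_ures J)]
  · -- fibres
    intro I J
    constructor
    · intro hgeq
      obtain ⟨u, hu⟩ := hker _ _ (genOf_ures I) (genOf_ures J) hgeq
      obtain ⟨w, hw⟩ := genOf_ures J
      refine ⟨genOf J * w, (u⁻¹ : Rˣ) * genOf I * w, hw, ?_, ?_⟩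
      · rw [Ideal.Quotient.eq] at hu
        have hiu : ((u⁻¹ : Rˣ) : R) * (u : R) = 1 := Units.inv_mul u
        have hd : ((u⁻¹ : Rˣ) : R) * genOf I * w - genOf J * w =
            ((u⁻¹ : Rˣ) : R) * w * (genOf I - (u : R) * genOf J) := by
          linear_combination (w * genOf J) * hiu
        have : ((u⁻¹ : Rˣ) : R) * genOf I * w - genOf J * w ∈ 𝔪 := by
          rw [hd]; exact Ideal.mul_mem_left _ _ hu
        rw [show (1 : R ⧸ 𝔪) = Ideal.Quotient.mk 𝔪 (genOf J * w) from hw.symm,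
          Ideal.Quotient.eq]
        exact this
      · rw [show I.1 = Ideal.span {genOf I} from (genOf_span I).symm,
          show J.1 = Ideal.span {genOf J} from (genOf_span J).symm,
          Ideal.span_singleton_mul_span_singleton, Ideal.span_singleton_mul_span_singleton,
          Ideal.span_singleton_eq_span_singleton]
        exact ⟨u⁻¹, by ring⟩
    · rintro ⟨α, β, hα, hβ, hspan⟩
      show g (genOf I) = g (genOf J)
      rw [show I.1 = Ideal.span {genOf I} from (genOf_span I).symm,
        show J.1 = Ideal.span {genOf J} from (genOf_span J).symm,
        Ideal.span_singleton_mul_span_singleton, Ideal.span_singleton_mul_span_singleton,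
        Ideal.span_singleton_eq_span_singleton] at hspan
      obtain ⟨u, hu⟩ := hspan
      have hUα : URes 𝔪 α := URes.of_mk_eq_one hα
      have hUβ : URes 𝔪 β := URes.of_mk_eq_one hβ
      have hgα : g α = 0 := by
        rw [hg0 α 1 (by rw [hα, map_one]), ← Units.val_one, hunit]
      have hgβ : g β = 0 := by
        rw [hg0 β 1 (by rw [hβ, map_one]), ← Units.val_one, hunit]
      have h1 : g (α * genOf I * u) = g α + g (genOf I) + g u := by
        rw [hmul _ _ (hUα.mul (genOf_ures I)) (URes.unit u), hmul _ _ hUα (genOf_ures I),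
          hunit, add_zero]
      have h2 : g (β * genOf J) = g β + g (genOf J) := hmul _ _ hUβ (genOf_ures J)
      rw [hu] at h1
      rw [h2] at h1
      rw [hunit] at h1
      simpa [hgα, hgβ] using h1.symm
end Abstract


section ZsqrtdRay
open Zsqrtd

/-- invertibility mod 4 at the level of `ZMod 4` components -/
def Vz (d : ℤ) (A B : ZMod 4) : Prop :=
  ∃ C D : ZMod 4, A * C + (d : ZMod 4) * (B * D) = 1 ∧ A * D + B * C = 0

instance (d : ℤ) (A B : ZMod 4) : Decidable (Vz d A B) := by unfold Vz; infer_instance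

theorem intCast_four (d : ℤ) : (((4:ℤ) : ℤ√d)) = (4 : ℤ√d) := by push_cast; ring

theorem dvd_four_iff {d : ℤ} (z : ℤ√d) :
    (4 : ℤ√d) ∣ z ↔ ((z.re : ZMod 4) = 0 ∧ (z.im : ZMod 4) = 0) := by
  rw [← intCast_four, Zsqrtd.intCast_dvd]
  rw [ZMod.intCast_zmod_eq_zero_iff_dvd z.re 4, ZMod.intCast_zmod_eq_zero_iff_dvd z.im 4]
  norm_num

theorem cong_iff {d : ℤ} (x y : ℤ√d) :
    Ideal.Quotient.mk (Ideal.span {(4 : ℤ√d)}) x = Ideal.Quotient.mk _ y ↔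
      ((x.re : ZMod 4) = (y.re : ZMod 4) ∧ (x.im : ZMod 4) = (y.im : ZMod 4)) := by
  rw [Ideal.Quotient.eq, Ideal.mem_span_singleton, dvd_four_iff]
  constructor
  · rintro ⟨h1, h2⟩
    constructor
    · have : ((x.re - y.re : ℤ) : ZMod 4) = 0 := by exact_mod_cast h1
      push_cast at this; linear_combination this
    · have : ((x.im - y.im : ℤ) : ZMod 4) = 0 := by exact_mod_cast h2
      push_cast at this; linear_combination this
  · rintro ⟨h1, h2⟩
    constructor
    · show ((x - y).re : ZMod 4) = 0
      rw [Zsqrtd.re_sub]; push_cast; linear_combination h1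
    · show ((x - y).im : ZMod 4) = 0
      rw [Zsqrtd.im_sub]; push_cast; linear_combination h2

theorem ures_to_vz {d : ℤ} (x : ℤ√d) (h : URes (Ideal.span {(4 : ℤ√d)}) x) :
    Vz d (x.re : ZMod 4) (x.im : ZMod 4) := by
  obtain ⟨y, hy⟩ := h
  rw [show (1 : (ℤ√d) ⧸ Ideal.span {(4 : ℤ√d)}) = Ideal.Quotient.mk _ 1 from (map_one _).symm,
    cong_iff] at hy
  obtain ⟨h1, h2⟩ := hy
  refine ⟨(y.re : ZMod 4), (y.im : ZMod 4), ?_, ?_⟩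
  · rw [Zsqrtd.re_mul] at h1; push_cast [Zsqrtd.re_one] at h1; linear_combination h1
  · rw [Zsqrtd.im_mul] at h2; push_cast [Zsqrtd.im_one] at h2; linear_combination h2

theorem mk_eq_of_components {d : ℤ} (x y : ℤ√d)
    (h1 : (x.re : ZMod 4) = (y.re : ZMod 4)) (h2 : (x.im : ZMod 4) = (y.im : ZMod 4)) :
    Ideal.Quotient.mk (Ideal.span {(4 : ℤ√d)}) x = Ideal.Quotient.mk _ y :=
  (cong_iff x y).mpr ⟨h1, h2⟩

-- §§ Gaussian case d = -1
def G1 (A B : ZMod 4) : ZMod 2 := if A * B = 0 then 0 else 1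
def gG (x : ℤ√(-1)) : ZMod 2 := G1 (x.re : ZMod 4) (x.im : ZMod 4)

theorem L1mul : ∀ A B C D : ZMod 4, Vz (-1) A B → Vz (-1) C D →
    G1 (A*C + ((-1:ℤ) : ZMod 4)*(B*D)) (A*D + B*C) = G1 A B + G1 C D := by decide

theorem L1ker : ∀ A B C D : ZMod 4, Vz (-1) A B → Vz (-1) C D → G1 A B = G1 C D →
    (A = C ∧ B = D) ∨ (A = -C ∧ B = -D) ∨ (A = -D ∧ B = C) ∨ (A = D ∧ B = -C) := by decide

theorem units_classify_neg_one (u : (ℤ√(-1))ˣ) :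
    (u:ℤ√(-1)) = ⟨1,0⟩ ∨ (u:ℤ√(-1)) = ⟨-1,0⟩ ∨ (u:ℤ√(-1)) = ⟨0,1⟩ ∨ (u:ℤ√(-1)) = ⟨0,-1⟩ := by
  have h := (Zsqrtd.norm_eq_one_iff' (by norm_num) _).mpr u.isUnit
  rw [Zsqrtd.norm_def] at h
  set a := (u:ℤ√(-1)).re with ha
  set b := (u:ℤ√(-1)).im with hb
  have h1 : -1 ≤ a := by nlinarith [sq_nonneg b, sq_nonneg (a+1)]
  have h2 : a ≤ 1 := by nlinarith [sq_nonneg b, sq_nonneg (a-1)]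
  have h3 : -1 ≤ b := by nlinarith [sq_nonneg a, sq_nonneg (b+1)]
  have h4 : b ≤ 1 := by nlinarith [sq_nonneg a, sq_nonneg (b-1)]
  simp only [Zsqrtd.ext_iff, ← ha, ← hb]
  interval_cases a <;> interval_cases b <;> omega

def uI : (ℤ√(-1))ˣ :=
  ⟨⟨0,1⟩, ⟨0,-1⟩, by ext <;> simp [Zsqrtd.re_mul, Zsqrtd.im_mul],
    by ext <;> simp [Zsqrtd.re_mul, Zsqrtd.im_mul]⟩
def uNegI : (ℤ√(-1))ˣ :=
  ⟨⟨0,-1⟩, ⟨0,1⟩, by ext <;> simp [Zsqrtd.re_mul, Zsqrtd.im_mul],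
    by ext <;> simp [Zsqrtd.re_mul, Zsqrtd.im_mul]⟩

theorem gG_unit (u : (ℤ√(-1))ˣ) : gG (u : ℤ√(-1)) = 0 := by
  rcases units_classify_neg_one u with h | h | h | h <;>
    · rw [show ((u:ℤ√(-1)) : ℤ√(-1)) = _ from h]
      simp [gG, G1]

theorem gG_congr (x y : ℤ√(-1))
    (h : Ideal.Quotient.mk (Ideal.span {(4 : ℤ√(-1))}) x = Ideal.Quotient.mk _ y) :
    gG x = gG y := by
  obtain ⟨h1, h2⟩ := (cong_iff x y).mp h
  unfold gG
  rw [h1, h2]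

theorem gG_mul (x y : ℤ√(-1)) (hx : URes (Ideal.span {(4 : ℤ√(-1))}) x)
    (hy : URes (Ideal.span {(4 : ℤ√(-1))}) y) : gG (x * y) = gG x + gG y := by
  have hV1 := ures_to_vz x hx
  have hV2 := ures_to_vz y hy
  have hre : (((x*y).re : ℤ) : ZMod 4) =
      (x.re:ZMod 4) * (y.re:ZMod 4) + ((-1:ℤ) : ZMod 4) * ((x.im:ZMod 4)*(y.im:ZMod 4)) := by
    rw [Zsqrtd.re_mul]; push_cast; ring
  have him : (((x*y).im : ℤ) : ZMod 4) =
      (x.re:ZMod 4)*(y.im:ZMod 4) + (x.im:ZMod 4)*(y.re:ZMod 4) := by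
    rw [Zsqrtd.im_mul]; push_cast; ring
  unfold gG
  rw [hre, him]
  exact L1mul _ _ _ _ hV1 hV2

theorem gG_surj (c : ZMod 2) :
    ∃ x : ℤ√(-1), URes (Ideal.span {(4 : ℤ√(-1))}) x ∧ gG x = c := by
  fin_cases c
  · exact ⟨1, ⟨1, by rw [mul_one, map_one]⟩, by simp [gG, G1]; rfl⟩
  · refine ⟨⟨1,2⟩, ⟨⟨1,-2⟩, ?_⟩, by rfl⟩
    rw [show (1 : (ℤ√(-1)) ⧸ Ideal.span {(4:ℤ√(-1))}) = Ideal.Quotient.mk _ 1 from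
      (map_one _).symm]
    apply mk_eq_of_components <;> decide

theorem gG_ker (x y : ℤ√(-1)) (hx : URes (Ideal.span {(4 : ℤ√(-1))}) x)
    (hy : URes (Ideal.span {(4 : ℤ√(-1))}) y) (h : gG x = gG y) :
    ∃ u : (ℤ√(-1))ˣ, Ideal.Quotient.mk (Ideal.span {(4 : ℤ√(-1))}) x =
      Ideal.Quotient.mk _ ((u : ℤ√(-1)) * y) := by
  rcases L1ker _ _ _ _ (ures_to_vz x hx) (ures_to_vz y hy) h with
    ⟨h1, h2⟩ | ⟨h1, h2⟩ | ⟨h1, h2⟩ | ⟨h1, h2⟩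
  · refine ⟨1, mk_eq_of_components _ _ ?_ ?_⟩ <;>
      simp only [Units.val_one, one_mul] <;> assumption
  · refine ⟨-1, mk_eq_of_components _ _ ?_ ?_⟩ <;>
      · simp only [Units.val_neg, Units.val_one, neg_mul, one_mul, Zsqrtd.re_neg, Zsqrtd.im_neg]
        push_cast
        simp only [h1, h2]
  · refine ⟨uI, mk_eq_of_components _ _ ?_ ?_⟩ <;>
      · simp only [show (uI:ℤ√(-1)) = (⟨0,1⟩:ℤ√(-1)) from rfl, Zsqrtd.re_mul, Zsqrtd.im_mul]
        push_cast
        simp only [h1, h2]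
        ring
  · refine ⟨uNegI, mk_eq_of_components _ _ ?_ ?_⟩ <;>
      · simp only [show (uNegI:ℤ√(-1)) = (⟨0,-1⟩:ℤ√(-1)) from rfl, Zsqrtd.re_mul, Zsqrtd.im_mul]
        push_cast
        simp only [h1, h2]
        ring

theorem span_four_ne_top {d : ℤ} : (Ideal.span {(4 : ℤ√d)}) ≠ ⊤ := by
  intro h
  have h1 : (1 : ℤ√d) ∈ Ideal.span {(4 : ℤ√d)} := h ▸ Submodule.mem_top
  rw [Ideal.mem_span_singleton, dvd_four_iff] at h1
  obtain ⟨h1a, -⟩ := h1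
  rw [Zsqrtd.re_one] at h1a
  exact absurd h1a (by decide)

-- §§ case d = -2
def G2 (A B : ZMod 4) : ZMod 4 := A * B
def gT (x : ℤ√(-2)) : ZMod 4 := G2 (x.re : ZMod 4) (x.im : ZMod 4)

theorem L2mul : ∀ A B C D : ZMod 4, Vz (-2) A B → Vz (-2) C D →
    G2 (A*C + ((-2:ℤ) : ZMod 4)*(B*D)) (A*D + B*C) = G2 A B + G2 C D := by decide

theorem L2ker : ∀ A B C D : ZMod 4, Vz (-2) A B → Vz (-2) C D → G2 A B = G2 C D →
    (A = C ∧ B = D) ∨ (A = -C ∧ B = -D) := by decide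

theorem units_classify_neg_two (u : (ℤ√(-2))ˣ) :
    (u:ℤ√(-2)) = ⟨1,0⟩ ∨ (u:ℤ√(-2)) = ⟨-1,0⟩ := by
  have h := (Zsqrtd.norm_eq_one_iff' (by norm_num) _).mpr u.isUnit
  rw [Zsqrtd.norm_def] at h
  set a := (u:ℤ√(-2)).re with ha
  set b := (u:ℤ√(-2)).im with hb
  have h1 : -1 ≤ a := by nlinarith [sq_nonneg b, sq_nonneg (a+1)]
  have h2 : a ≤ 1 := by nlinarith [sq_nonneg b, sq_nonneg (a-1)]
  have h3 : -1 ≤ b := by nlinarith [sq_nonneg a, sq_nonneg (b+1)]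
  have h4 : b ≤ 1 := by nlinarith [sq_nonneg a, sq_nonneg (b-1)]
  simp only [Zsqrtd.ext_iff, ← ha, ← hb]
  interval_cases a <;> interval_cases b <;> omega

theorem gT_unit (u : (ℤ√(-2))ˣ) : gT (u : ℤ√(-2)) = 0 := by
  rcases units_classify_neg_two u with h | h <;>
    · rw [show ((u:ℤ√(-2)) : ℤ√(-2)) = _ from h]
      simp [gT, G2]

theorem gT_congr (x y : ℤ√(-2))
    (h : Ideal.Quotient.mk (Ideal.span {(4 : ℤ√(-2))}) x = Ideal.Quotient.mk _ y) :
    gT x = gT y := by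
  obtain ⟨h1, h2⟩ := (cong_iff x y).mp h
  unfold gT
  rw [h1, h2]

theorem gT_mul (x y : ℤ√(-2)) (hx : URes (Ideal.span {(4 : ℤ√(-2))}) x)
    (hy : URes (Ideal.span {(4 : ℤ√(-2))}) y) : gT (x * y) = gT x + gT y := by
  have hV1 := ures_to_vz x hx
  have hV2 := ures_to_vz y hy
  have hre : (((x*y).re : ℤ) : ZMod 4) =
      (x.re:ZMod 4) * (y.re:ZMod 4) + ((-2:ℤ) : ZMod 4) * ((x.im:ZMod 4)*(y.im:ZMod 4)) := by
    rw [Zsqrtd.re_mul]; push_cast; ring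
  have him : (((x*y).im : ℤ) : ZMod 4) =
      (x.re:ZMod 4)*(y.im:ZMod 4) + (x.im:ZMod 4)*(y.re:ZMod 4) := by
    rw [Zsqrtd.im_mul]; push_cast; ring
  unfold gT
  rw [hre, him]
  exact L2mul _ _ _ _ hV1 hV2

theorem gT_surj (c : ZMod 4) :
    ∃ x : ℤ√(-2), URes (Ideal.span {(4 : ℤ√(-2))}) x ∧ gT x = c := by
  have key : ∀ x y : ℤ√(-2), (((x*y).re : ZMod 4) = ((1:ℤ√(-2)).re : ZMod 4)) →
      (((x*y).im : ZMod 4) = ((1:ℤ√(-2)).im : ZMod 4)) →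
      URes (Ideal.span {(4 : ℤ√(-2))}) x := by
    intro x y hr hi
    refine ⟨y, ?_⟩
    rw [show (1 : (ℤ√(-2)) ⧸ Ideal.span {(4:ℤ√(-2))}) = Ideal.Quotient.mk _ 1 from
      (map_one _).symm]
    exact mk_eq_of_components _ _ hr hi
  fin_cases c
  · exact ⟨1, ⟨1, by rw [mul_one, map_one]⟩, by rfl⟩
  · exact ⟨⟨1,1⟩, key ⟨1,1⟩ ⟨-1,1⟩ (by decide) (by decide), by rfl⟩
  · exact ⟨⟨3,2⟩, key ⟨3,2⟩ ⟨3,-2⟩ (by decide) (by decide), by rfl⟩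
  · exact ⟨⟨3,1⟩, key ⟨3,1⟩ ⟨1,1⟩ (by decide) (by decide), by rfl⟩

theorem gT_ker (x y : ℤ√(-2)) (hx : URes (Ideal.span {(4 : ℤ√(-2))}) x)
    (hy : URes (Ideal.span {(4 : ℤ√(-2))}) y) (h : gT x = gT y) :
    ∃ u : (ℤ√(-2))ˣ, Ideal.Quotient.mk (Ideal.span {(4 : ℤ√(-2))}) x =
      Ideal.Quotient.mk _ ((u : ℤ√(-2)) * y) := by
  rcases L2ker _ _ _ _ (ures_to_vz x hx) (ures_to_vz y hy) h with ⟨h1, h2⟩ | ⟨h1, h2⟩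
  · refine ⟨1, mk_eq_of_components _ _ ?_ ?_⟩ <;>
      simp only [Units.val_one, one_mul] <;> assumption
  · refine ⟨-1, mk_eq_of_components _ _ ?_ ?_⟩ <;>
      · simp only [Units.val_neg, Units.val_one, neg_mul, one_mul, Zsqrtd.re_neg, Zsqrtd.im_neg]
        push_cast
        simp only [h1, h2]

end ZsqrtdRay

section Transfer
variable {R S : Type*} [CommRing R] [IsDomain R] [CommRing S] [IsDomain S]

theorem mk_eq_one_iff' {R : Type*} [CommRing R] {𝔪 : Ideal R} {x : R} :
    Ideal.Quotient.mk 𝔪 x = 1 ↔ x - 1 ∈ 𝔪 := by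
  rw [show (1 : R ⧸ 𝔪) = Ideal.Quotient.mk 𝔪 1 from (map_one _).symm, Ideal.Quotient.eq]

theorem rayEquiv_transfer (e : R ≃+* S) (𝔪 I J : Ideal R) (h : RayEquiv 𝔪 I J) :
    RayEquiv (Ideal.map (e : R →+* S) 𝔪) (Ideal.map (e : R →+* S) I)
      (Ideal.map (e : R →+* S) J) := by
  obtain ⟨α, β, hα, hβ, hs⟩ := h
  refine ⟨e α, e β, ?_, ?_, ?_⟩
  · rw [mk_eq_one_iff'] at hα ⊢
    rw [show e α - 1 = e (α - 1) by rw [map_sub, map_one]]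
    exact Ideal.mem_map_of_mem _ hα
  · rw [mk_eq_one_iff'] at hβ ⊢
    rw [show e β - 1 = e (β - 1) by rw [map_sub, map_one]]
    exact Ideal.mem_map_of_mem _ hβ
  · have h1 : Ideal.span {e α} = Ideal.map (e : R →+* S) (Ideal.span {α}) := by
      rw [Ideal.map_span, Set.image_singleton]; rfl
    have h2 : Ideal.span {e β} = Ideal.map (e : R →+* S) (Ideal.span {β}) := by
      rw [Ideal.map_span, Set.image_singleton]; rfl
    rw [h1, h2, ← Ideal.map_mul, ← Ideal.map_mul, hs]

theorem ray_transfer (e : R ≃+* S) (𝔪 : Ideal R) (n : ℕ)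
    (h : ∃ f : {I : Ideal R // I ≠ 0 ∧ IsCoprime I 𝔪} → ZMod n,
      Function.Surjective f ∧
      (∀ I J : {I : Ideal R // I ≠ 0 ∧ IsCoprime I 𝔪},
        f ⟨I.1 * J.1, mul_ne_zero I.2.1 J.2.1, I.2.2.mul_left J.2.2⟩ = f I + f J) ∧
      (∀ I J : {I : Ideal R // I ≠ 0 ∧ IsCoprime I 𝔪},
        (f I = f J ↔ RayEquiv 𝔪 I.1 J.1))) :
    ∃ F : {I : Ideal S // I ≠ 0 ∧ IsCoprime I (Ideal.map (e : R →+* S) 𝔪)} → ZMod n,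
      Function.Surjective F ∧
      (∀ I J : {I : Ideal S // I ≠ 0 ∧ IsCoprime I (Ideal.map (e : R →+* S) 𝔪)},
        F ⟨I.1 * J.1, mul_ne_zero I.2.1 J.2.1, I.2.2.mul_left J.2.2⟩ = F I + F J) ∧
      (∀ I J : {I : Ideal S // I ≠ 0 ∧ IsCoprime I (Ideal.map (e : R →+* S) 𝔪)},
        (F I = F J ↔ RayEquiv (Ideal.map (e : R →+* S) 𝔪) I.1 J.1)) := by
  obtain ⟨f, hsurj, hadd, hfib⟩ := h
  have hde : ∀ I : Ideal R, Ideal.map (e.symm : S →+* R) (Ideal.map (e : R →+* S) I) = I :=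
    fun I => Ideal.map_of_equiv e
  have hed : ∀ J : Ideal S, Ideal.map (e : R →+* S) (Ideal.map (e.symm : S →+* R) J) = J :=
    fun J => by
      have := Ideal.map_of_equiv (I := J) e.symm
      rwa [RingEquiv.symm_symm] at this
  have hne : ∀ J : Ideal S, J ≠ 0 → Ideal.map (e.symm : S →+* R) J ≠ 0 := fun J hJ h0 => hJ (by
    rw [← hed J, h0]
    exact Ideal.map_bot)
  have hcop : ∀ J : Ideal S, IsCoprime J (Ideal.map (e : R →+* S) 𝔪) →
      IsCoprime (Ideal.map (e.symm : S →+* R) J) 𝔪 := fun J hJ => by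
    rw [Ideal.isCoprime_iff_sup_eq] at hJ ⊢
    have h2 := congrArg (Ideal.map (e.symm : S →+* R)) hJ
    rwa [Ideal.map_sup, hde 𝔪, Ideal.map_top] at h2
  set Φ : {I : Ideal S // I ≠ 0 ∧ IsCoprime I (Ideal.map (e : R →+* S) 𝔪)} →
      {I : Ideal R // I ≠ 0 ∧ IsCoprime I 𝔪} :=
    fun J => ⟨Ideal.map (e.symm : S →+* R) J.1, hne _ J.2.1, hcop _ J.2.2⟩ with hΦ
  refine ⟨fun J => f (Φ J), ?_, ?_, ?_⟩
  · intro c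
    obtain ⟨I, hI⟩ := hsurj c
    have hne' : Ideal.map (e : R →+* S) I.1 ≠ 0 := fun h0 => I.2.1 (by
      rw [← hde I.1, h0]; exact Ideal.map_bot)
    have hcop' : IsCoprime (Ideal.map (e : R →+* S) I.1) (Ideal.map (e : R →+* S) 𝔪) := by
      rw [Ideal.isCoprime_iff_sup_eq, ← Ideal.map_sup, I.2.2.sup_eq]
      exact Ideal.map_top _
    refine ⟨⟨Ideal.map (e : R →+* S) I.1, hne', hcop'⟩, ?_⟩
    show f (Φ _) = c
    rw [← hI]
    exact congrArg f (Subtype.ext (hde I.1))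
  · intro I J
    have key : Φ ⟨I.1 * J.1, mul_ne_zero I.2.1 J.2.1, I.2.2.mul_left J.2.2⟩ =
        ⟨(Φ I).1 * (Φ J).1, mul_ne_zero (Φ I).2.1 (Φ J).2.1,
          (Φ I).2.2.mul_left (Φ J).2.2⟩ :=
      Subtype.ext (Ideal.map_mul _ _ _)
    exact (congrArg f key).trans (hadd (Φ I) (Φ J))
  · intro I J
    show f (Φ I) = f (Φ J) ↔ _
    rw [hfib (Φ I) (Φ J)]
    constructor
    · intro hre
      have h2 := rayEquiv_transfer e 𝔪 _ _ hre
      rwa [hed I.1, hed J.1] at h2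
    · intro hre
      have h2 := rayEquiv_transfer e.symm (Ideal.map (e : R →+* S) 𝔪) I.1 J.1 hre
      rwa [hde 𝔪] at h2
end Transfer


theorem zsqrtd_isDomain {d : ℤ} (hd0 : d < 0) : IsDomain (ℤ√d) := by
  have : NoZeroDivisors (ℤ√d) := ⟨fun {x y} hxy => by
    have h := congrArg Zsqrtd.norm hxy
    rw [Zsqrtd.norm_mul, Zsqrtd.norm_zero] at h
    rcases mul_eq_zero.mp h with h'|h'
    · exact Or.inl ((Zsqrtd.norm_eq_zero_iff hd0 _).mp h')
    · exact Or.inr ((Zsqrtd.norm_eq_zero_iff hd0 _).mp h')⟩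
  exact NoZeroDivisors.to_isDomain _

instance : IsDomain (ℤ√(-2)) := zsqrtd_isDomain (by norm_num)

section PolySec
open Polynomial NumberField

theorem rat_sq_int (q : ℚ) (N : ℤ) (h : q^2 = (N:ℚ)) : ∃ t : ℤ, q = (t:ℚ) := by
  have hint : IsIntegral ℤ q := by
    refine ⟨X^2 - C N, monic_X_pow_sub_C _ (by norm_num), ?_⟩
    simp only [eval₂_sub, eval₂_pow, eval₂_X, eval₂_C]
    rw [show (algebraMap ℤ ℚ) N = (N:ℚ) from rfl, ← h]
    ring
  obtain ⟨t, ht⟩ := IsIntegrallyClosed.isIntegral_iff.mp hint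
  exact ⟨t, by rw [← ht]; rfl⟩

theorem coords_int (c : ℤ) (hc : c = 1 ∨ c = 2) (a b : ℚ) (m n' : ℤ)
    (hm : 2 * a = (m:ℚ)) (hn : a^2 + (c:ℚ) * b^2 = (n':ℚ)) :
    (∃ a' : ℤ, a = (a':ℚ)) ∧ (∃ b' : ℤ, b = (b':ℚ)) := by
  obtain ⟨k, hk⟩ : ∃ k : ℤ, 2*b = (k:ℚ) := by
    rcases hc with rfl | rfl
    · exact rat_sq_int (2*b) (4*n' - m^2)
        (by push_cast; linear_combination 4*hn - (2*a + (m:ℚ))*hm)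
    · obtain ⟨t, ht⟩ := rat_sq_int (4*b) (2*(4*n' - m^2))
        (by push_cast; linear_combination 8*hn - 2*(2*a + (m:ℚ))*hm)
      have ht2 : (t:ℚ)^2 = 2*(4*(n':ℚ) - (m:ℚ)^2) := by
        rw [← ht]; push_cast; linear_combination 8*hn - 2*(2*a + (m:ℚ))*hm
      have ht2' : t^2 = 2*(4*n' - m^2) := by exact_mod_cast ht2
      have htev : Even t := by
        rcases Int.even_or_odd t with h|⟨s, rfl⟩
        · exact h
        · exfalso
          obtain ⟨w, hw⟩ : ∃ w:ℤ, (1:ℤ) = 2*w :=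
            ⟨(4*n'-m^2) - 2*s^2 - 2*s, by linear_combination ht2'⟩
          omega
      obtain ⟨s, hs⟩ := htev
      refine ⟨s, ?_⟩
      have hts : (t:ℚ) = (s:ℚ) + (s:ℚ) := by exact_mod_cast congrArg (Int.cast : ℤ → ℚ) hs
      rw [hts] at ht
      linarith
  have hmain : m^2 + c*k^2 = 4*n' := by
    have : (m:ℚ)^2 + (c:ℚ)*(k:ℚ)^2 = 4*(n':ℚ) := by
      linear_combination 4*hn - (2*a + (m:ℚ))*hm - (c:ℚ)*(2*b + (k:ℚ))*hk
    exact_mod_cast this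
  have hparity : Even m ∧ Even k := by
    rcases hc with rfl | rfl
    · constructor
      · rcases Int.even_or_odd m with h|⟨s, rfl⟩
        · exact h
        · exfalso
          rcases Int.even_or_odd k with ⟨u, rfl⟩|⟨u, rfl⟩
          · obtain ⟨w, hw⟩ : ∃ w:ℤ, (1:ℤ) = 4*w :=
              ⟨n' - s^2 - s - u^2, by linear_combination hmain⟩
            omega
          · obtain ⟨w, hw⟩ : ∃ w:ℤ, (2:ℤ) = 4*w :=
              ⟨n' - s^2 - s - u^2 - u, by linear_combination hmain⟩
            omega
      · rcases Int.even_or_odd k with h|⟨u, rfl⟩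
        · exact h
        · exfalso
          rcases Int.even_or_odd m with ⟨s, rfl⟩|⟨s, rfl⟩
          · obtain ⟨w, hw⟩ : ∃ w:ℤ, (1:ℤ) = 4*w :=
              ⟨n' - s^2 - u^2 - u, by linear_combination hmain⟩
            omega
          · obtain ⟨w, hw⟩ : ∃ w:ℤ, (2:ℤ) = 4*w :=
              ⟨n' - s^2 - s - u^2 - u, by linear_combination hmain⟩
            omega
    · have hmev : Even m := by
        rcases Int.even_or_odd m with h|⟨s, rfl⟩
        · exact h
        · exfalso
          obtain ⟨w, hw⟩ : ∃ w:ℤ, (1:ℤ) = 2*w :=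
            ⟨2*n' - 2*s^2 - 2*s - k^2, by linear_combination hmain⟩
          omega
      refine ⟨hmev, ?_⟩
      obtain ⟨s, rfl⟩ := hmev
      rcases Int.even_or_odd k with h|⟨u, rfl⟩
      · exact h
      · exfalso
        obtain ⟨w, hw⟩ : ∃ w:ℤ, (2:ℤ) = 4*w :=
          ⟨n' - s^2 - 2*u^2 - 2*u, by linear_combination hmain⟩
        omega
  obtain ⟨⟨s, rfl⟩, ⟨u, rfl⟩⟩ := hparity
  push_cast at hm hk
  exact ⟨⟨s, by linarith⟩, ⟨u, by linarith⟩⟩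

open Zsqrtd in
theorem exists_ring_equiv (d : ℤ) (hd : d = -1 ∨ d = -2)
    (K : Type) [Field K] [NumberField K] (α : K) (hα : α ^ 2 = (d:K))
    (hrank : Module.finrank ℚ K = 2) :
    Nonempty (ℤ√d ≃+* 𝓞 K) := by
  have hdneg : d < 0 := by rcases hd with rfl|rfl <;> norm_num
  have hirr : ∀ r : ℚ, algebraMap ℚ K r ≠ α := by
    intro r hr
    have h1 : (algebraMap ℚ K) (r^2) = algebraMap ℚ K ((d:ℚ)) := by
      rw [map_pow, hr, hα, map_intCast]
    have h2 : r^2 = (d:ℚ) := (algebraMap ℚ K).injective h1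
    nlinarith [sq_nonneg r, show ((d:ℚ)) < 0 from by exact_mod_cast hdneg]
  have hα0 : α ≠ 0 := by
    intro h
    rw [h] at hα
    have : (d:K) = 0 := by rw [← hα]; ring
    rw [Int.cast_eq_zero] at this
    omega
  have hli : LinearIndependent ℚ ![(1:K), α] := by
    rw [linearIndependent_fin2]
    refine ⟨by simpa using hα0, ?_⟩
    intro r heq
    simp only [Matrix.cons_val_one, Matrix.head_cons, Matrix.cons_val_zero] at heq
    apply hirr r⁻¹
    rw [map_inv₀]
    rw [Algebra.smul_def] at heq
    exact inv_eq_of_mul_eq_one_right heq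
  have hspan : ∀ x : K, ∃ a b : ℚ, x = algebraMap ℚ K a + algebraMap ℚ K b * α := by
    intro x
    have htop : Submodule.span ℚ (Set.range ![(1:K), α]) = ⊤ := by
      apply Submodule.eq_top_of_finrank_eq
      rw [finrank_span_eq_card hli]
      simp [hrank]
    have hx : x ∈ Submodule.span ℚ (Set.range ![(1:K), α]) := htop ▸ Submodule.mem_top
    obtain ⟨cf, hcf⟩ := (Submodule.mem_span_range_iff_exists_fun ℚ).mp hx
    refine ⟨cf 0, cf 1, ?_⟩
    rw [← hcf]
    simp [Fin.sum_univ_two, Algebra.smul_def]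
  have hαint : IsIntegral ℤ α := by
    refine ⟨X^2 - C d, monic_X_pow_sub_C _ (by norm_num), ?_⟩
    simp only [eval₂_sub, eval₂_pow, eval₂_X, eval₂_C]
    rw [show (algebraMap ℤ K) d = (d:K) from map_intCast _ _, ← hα]
    ring
  set θ : 𝓞 K := ⟨α, hαint⟩ with hθ
  have hθ2 : θ * θ = ((d : ℤ) : 𝓞 K) := by
    apply NumberField.RingOfIntegers.ext
    push_cast
    show α * α = (d:K)
    rw [← hα]; ring
  set e : ℤ√d →+* 𝓞 K := Zsqrtd.lift ⟨θ, hθ2⟩ with he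
  have hinj : Function.Injective e :=
    Zsqrtd.lift_injective _ (fun n hn => by nlinarith [mul_self_nonneg n])
  have heval : ∀ z : ℤ√d, ((e z : 𝓞 K) : K) = (z.re : K) + (z.im : K) * α := by
    intro z
    rw [he, Zsqrtd.lift_apply_apply]
    push_cast
    rfl
  have hsurj : Function.Surjective e := by
    intro x
    obtain ⟨a, b, hx⟩ := hspan (x : K)
    by_cases hb : b = 0
    · subst hb
      rw [map_zero, zero_mul, add_zero] at hx
      have hint : IsIntegral ℤ a := by
        rw [← isIntegral_algebraMap_iff (algebraMap ℚ K).injective, ← hx]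
        exact x.isIntegral_coe
      obtain ⟨t, ht⟩ := IsIntegrallyClosed.isIntegral_iff.mp hint
      refine ⟨⟨t, 0⟩, RingOfIntegers.ext ?_⟩
      rw [heval]
      show (t:K) + (0:ℤ) * α = (x:K)
      rw [hx, ← ht, show (algebraMap ℤ ℚ) t = ((t:ℤ):ℚ) from by simp,
        show (algebraMap ℚ K) ((t:ℤ):ℚ) = ((t:ℤ):K) from map_intCast _ _]
      push_cast
      ring
    · have hαQ : α^2 = algebraMap ℚ K ((d:ℚ)) := by rw [hα, map_intCast]
      have hnotin : (x:K) ∉ (algebraMap ℚ K).range := by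
        rintro ⟨r, hr⟩
        apply hirr ((r - a)/b)
        have hb0 : algebraMap ℚ K b ≠ 0 := fun h => hb ((algebraMap ℚ K).injective
          (by rw [h, map_zero]))
        have hba : algebraMap ℚ K b * α = algebraMap ℚ K r - algebraMap ℚ K a := by
          rw [hr, hx]; ring
        rw [map_div₀, map_sub, div_eq_iff hb0]
        linear_combination -hba
      have hint : IsIntegral ℚ (x:K) := IsIntegral.tower_top x.isIntegral_coe
      have hq0 : Polynomial.aeval (x:K) (X^2 - C (2*a) * X + C (a^2 - (d:ℚ)*b^2)) = 0 := by
        simp only [map_add, map_sub, map_mul, map_pow, aeval_X, aeval_C, map_ofNat]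
        rw [hx]
        linear_combination ((algebraMap ℚ K) b)^2 * hαQ
      have hqm : (X^2 - C (2*a) * X + C (a^2 - (d:ℚ)*b^2)).Monic := by monicity!
      have hqd : (X^2 - C (2*a) * X + C (a^2 - (d:ℚ)*b^2)).natDegree = 2 := by compute_degree!
      have hdvd : minpoly ℚ (x:K) ∣ (X^2 - C (2*a) * X + C (a^2 - (d:ℚ)*b^2)) :=
        minpoly.dvd ℚ _ hq0
      have hdeg2 : 2 ≤ (minpoly ℚ (x:K)).natDegree := by
        by_contra hlt
        push_neg at hlt
        have hpos := minpoly.natDegree_pos hint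
        have h1 : (minpoly ℚ (x:K)).natDegree = 1 := by omega
        apply hnotin
        rw [← minpoly.degree_eq_one_iff]
        exact_mod_cast (Polynomial.degree_eq_iff_natDegree_eq (minpoly.ne_zero hint)).mpr h1
      have hqmin : minpoly ℚ (x:K) = X^2 - C (2*a) * X + C (a^2 - (d:ℚ)*b^2) :=
        Polynomial.eq_of_dvd_of_natDegree_le_of_leadingCoeff hdvd
          (by rw [hqd]; exact hdeg2)
          (by rw [(minpoly.monic hint).leadingCoeff, hqm.leadingCoeff])
      have hmap : minpoly ℚ (x:K) = (minpoly ℤ (x:K)).map (algebraMap ℤ ℚ) :=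
        minpoly.isIntegrallyClosed_eq_field_fractions' ℚ x.isIntegral_coe
      have hco : ∀ i, (X^2 - C (2*a) * X + C (a^2 - (d:ℚ)*b^2)).coeff i
          = (((minpoly ℤ (x:K)).coeff i : ℤ) : ℚ) := by
        intro i
        rw [← hqmin, hmap, coeff_map]
        simp
      have hcoeff1 : -(2*a) = (((minpoly ℤ (x:K)).coeff 1 : ℤ) : ℚ) := by
        rw [← hco 1]
        simp only [coeff_add, coeff_sub, coeff_C_mul, coeff_X_pow, coeff_X, coeff_C]
        norm_num
      have hcoeff0 : a^2 - (d:ℚ)*b^2 = (((minpoly ℤ (x:K)).coeff 0 : ℤ) : ℚ) := by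
        rw [← hco 0]
        simp only [coeff_add, coeff_sub, coeff_C_mul, coeff_X_pow, coeff_X, coeff_C]
        norm_num
      obtain ⟨⟨a', ha'⟩, ⟨b', hb'⟩⟩ := coords_int (-d) (by omega) a b
        (-(minpoly ℤ (x:K)).coeff 1) ((minpoly ℤ (x:K)).coeff 0)
        (by push_cast; linarith [hcoeff1]) (by push_cast; linarith [hcoeff0])
      refine ⟨⟨a', b'⟩, RingOfIntegers.ext ?_⟩
      rw [heval]
      show ((a':ℤ):K) + ((b':ℤ):K) * α = (x:K)
      rw [hx, ha', hb']
      rw [show (algebraMap ℚ K) ((a':ℤ):ℚ) = ((a':ℤ):K) from map_intCast _ _,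
        show (algebraMap ℚ K) ((b':ℤ):ℚ) = ((b':ℤ):K) from map_intCast _ _]
  exact ⟨RingEquiv.ofBijective e ⟨hinj, hsurj⟩⟩

end PolySec

section Final
open Zsqrtd NumberField

theorem zsqrtd_irreducible_norm_two {d : ℤ} (hd : d ≤ 0) {p : ℤ√d} (hp : p.norm = 2) :
    Irreducible p := by
  constructor
  · intro hu
    rw [← Zsqrtd.norm_eq_one_iff' hd] at hu
    omega
  · intro a b hab
    have hn : a.norm * b.norm = 2 := by rw [← Zsqrtd.norm_mul, ← hab, hp]
    have ha := Zsqrtd.norm_nonneg hd a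
    have hle : a.norm ≤ 2 := Int.le_of_dvd (by norm_num) ⟨b.norm, hn.symm⟩
    set na := a.norm with hna
    interval_cases na
    · exfalso; simp at hn
    · exact Or.inl ((Zsqrtd.norm_eq_one_iff' hd a).mp hna.symm)
    · refine Or.inr ((Zsqrtd.norm_eq_one_iff' hd b).mp ?_)
      omega

theorem prime_sq_ideal {d : ℤ} (hd2 : -2 ≤ d) (hd0 : d < 0) (p : ℤ√d) (hnorm : p.norm = 2)
    (hpp : ∃ u : (ℤ√d)ˣ, p * p = (u : ℤ√d) * 2)
    (𝔞 : Ideal (ℤ√d)) (hprime : 𝔞.IsPrime) (h2 : (2:ℤ√d) ∈ 𝔞) : 𝔞 = Ideal.span {p} := by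
  have hpid := zsqrtd_pid hd2 hd0
  have hirr : Irreducible p := zsqrtd_irreducible_norm_two hd0.le hnorm
  have hmax : (Ideal.span {p}).IsMaximal := PrincipalIdealRing.isMaximal_of_irreducible hirr
  have hp𝔞 : p ∈ 𝔞 := by
    obtain ⟨u, hu⟩ := hpp
    have hmem : p * p ∈ 𝔞 := by rw [hu]; exact Ideal.mul_mem_left _ _ h2
    rcases hprime.mem_or_mem hmem with h|h <;> exact h
  have hle : Ideal.span {p} ≤ 𝔞 := by
    rw [Ideal.span_le, Set.singleton_subset_iff]; exact hp𝔞
  exact (hmax.eq_of_le hprime.ne_top hle).symm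

theorem a_pow_four {d : ℤ} (hd : d = -1 ∨ d = -2) {K : Type} [Field K] [NumberField K]
    (e : ℤ√d ≃+* 𝓞 K) (𝔞 : Ideal (𝓞 K)) (hprime : 𝔞.IsPrime)
    (hdvd : 𝔞 ∣ Ideal.span {(2 : 𝓞 K)}) :
    𝔞^4 = Ideal.map (e : ℤ√d →+* 𝓞 K) (Ideal.span {(4:ℤ√d)}) := by
  have hcomap : Ideal.map (e.symm : 𝓞 K →+* ℤ√d) 𝔞 = Ideal.comap (e : ℤ√d →+* 𝓞 K) 𝔞 :=
    Ideal.map_symm e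
  have hprime' : (Ideal.map (e.symm : 𝓞 K →+* ℤ√d) 𝔞).IsPrime := by
    rw [hcomap]; exact hprime.comap _
  have h2 : (2:𝓞 K) ∈ 𝔞 := Ideal.le_of_dvd hdvd (Ideal.mem_span_singleton_self _)
  have h2' : (2:ℤ√d) ∈ Ideal.map (e.symm : 𝓞 K →+* ℤ√d) 𝔞 := by
    rw [hcomap, Ideal.mem_comap, map_ofNat]
    exact h2
  have h𝔞 : 𝔞 = Ideal.map (e : ℤ√d →+* 𝓞 K) (Ideal.map (e.symm : 𝓞 K →+* ℤ√d) 𝔞) := by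
    rw [hcomap]
    exact (Ideal.map_comap_of_surjective (e : ℤ√d →+* 𝓞 K)
      (fun y => ⟨e.symm y, e.apply_symm_apply y⟩) 𝔞).symm
  rcases hd with rfl | rfl
  · have h𝔞' : Ideal.map (e.symm : 𝓞 K →+* ℤ√(-1)) 𝔞 = Ideal.span {(⟨1,1⟩ : ℤ√(-1))} :=
      prime_sq_ideal (by norm_num) (by norm_num) _ (by norm_num [Zsqrtd.norm_def])
        ⟨uI, by ext <;> simp [uI, Zsqrtd.re_mul, Zsqrtd.im_mul]⟩ _ hprime' h2'
    rw [h𝔞, h𝔞', ← Ideal.map_pow]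
    congr 1
    rw [Ideal.span_singleton_pow, Ideal.span_singleton_eq_span_singleton]
    refine ⟨-1, ?_⟩
    rw [show ((⟨1,1⟩ : ℤ√(-1)))^4 = -4 from by decide]
    decide
  · have h𝔞' : Ideal.map (e.symm : 𝓞 K →+* ℤ√(-2)) 𝔞 = Ideal.span {(⟨0,1⟩ : ℤ√(-2))} :=
      prime_sq_ideal (by norm_num) (by norm_num) _ (by norm_num [Zsqrtd.norm_def])
        ⟨(-1 : (ℤ√(-2))ˣ), by ext <;> simp [Zsqrtd.re_mul, Zsqrtd.im_mul]⟩ _ hprime' h2'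
    rw [h𝔞, h𝔞', ← Ideal.map_pow]
    congr 1
    rw [Ideal.span_singleton_pow, show ((⟨0,1⟩ : ℤ√(-2)))^4 = 4 from by decide]


theorem ray_gaussian :
    ∃ f : {I : Ideal (ℤ√(-1)) // I ≠ 0 ∧ IsCoprime I (Ideal.span {(4:ℤ√(-1))})} → ZMod 2,
      Function.Surjective f ∧
      (∀ I J : {I : Ideal (ℤ√(-1)) // I ≠ 0 ∧ IsCoprime I (Ideal.span {(4:ℤ√(-1))})},
        f ⟨I.1 * J.1, mul_ne_zero I.2.1 J.2.1, I.2.2.mul_left J.2.2⟩ = f I + f J) ∧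
      (∀ I J : {I : Ideal (ℤ√(-1)) // I ≠ 0 ∧ IsCoprime I (Ideal.span {(4:ℤ√(-1))})},
        (f I = f J ↔ RayEquiv (Ideal.span {(4:ℤ√(-1))}) I.1 J.1)) := by
  have : IsPrincipalIdealRing (ℤ√(-1)) := zsqrtd_pid (by norm_num) (by norm_num)
  exact ray_abstract span_four_ne_top gG_congr gG_mul gG_unit gG_surj gG_ker

theorem ray_neg_two :
    ∃ f : {I : Ideal (ℤ√(-2)) // I ≠ 0 ∧ IsCoprime I (Ideal.span {(4:ℤ√(-2))})} → ZMod 4,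
      Function.Surjective f ∧
      (∀ I J : {I : Ideal (ℤ√(-2)) // I ≠ 0 ∧ IsCoprime I (Ideal.span {(4:ℤ√(-2))})},
        f ⟨I.1 * J.1, mul_ne_zero I.2.1 J.2.1, I.2.2.mul_left J.2.2⟩ = f I + f J) ∧
      (∀ I J : {I : Ideal (ℤ√(-2)) // I ≠ 0 ∧ IsCoprime I (Ideal.span {(4:ℤ√(-2))})},
        (f I = f J ↔ RayEquiv (Ideal.span {(4:ℤ√(-2))}) I.1 J.1)) := by
  have : IsPrincipalIdealRing (ℤ√(-2)) := zsqrtd_pid (by norm_num) (by norm_num)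
  exact ray_abstract span_four_ne_top gT_congr gT_mul gT_unit gT_surj gT_ker

end Final

/-- For `K = ℚ(i)` with `𝔞` the unique prime above `2`, the ray class group of modulus `𝔞⁴`
is isomorphic to `ℤ/2ℤ`; for `K = ℚ(√-2)` with `𝔞` the unique prime above `2`, the ray class
group of modulus `𝔞⁴` is isomorphic to `ℤ/4ℤ`. -/
theorem rayClassGroup_modulus_a_pow_four :
    (∀ (K : Type) [Field K] [NumberField K] (α : K), α ^ 2 = -1 →
      Module.finrank ℚ K = 2 →
      ∀ 𝔞 : Ideal (𝓞 K), 𝔞.IsPrime → 𝔞 ∣ Ideal.span {(2 : 𝓞 K)} →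
        RayClassGroupIsoZMod K (𝔞 ^ 4) 2) ∧
    (∀ (K : Type) [Field K] [NumberField K] (α : K), α ^ 2 = -2 →
      Module.finrank ℚ K = 2 →
      ∀ 𝔞 : Ideal (𝓞 K), 𝔞.IsPrime → 𝔞 ∣ Ideal.span {(2 : 𝓞 K)} →
        RayClassGroupIsoZMod K (𝔞 ^ 4) 4) := by
  constructor
  · intro K _ _ α hα hrank 𝔞 hprime hdvd
    obtain ⟨e⟩ := exists_ring_equiv (-1) (Or.inl rfl) K α (by exact_mod_cast hα) hrank
    unfold RayClassGroupIsoZMod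
    rw [a_pow_four (Or.inl rfl) e 𝔞 hprime hdvd]
    exact ray_transfer e _ 2 ray_gaussian
  · intro K _ _ α hα hrank 𝔞 hprime hdvd
    obtain ⟨e⟩ := exists_ring_equiv (-2) (Or.inr rfl) K α (by exact_mod_cast hα) hrank
    unfold RayClassGroupIsoZMod
    rw [a_pow_four (Or.inr rfl) e 𝔞 hprime hdvd]
    exact ray_transfer e _ 4 ray_neg_two
end

section
/- Any subgroup H of GL_2(F_p) (p ≥ 5 prime) that acts irreducibly on F_p^2 and contains an element of order p must contain SL_2(F_p); if moreover det: H → F_p^* is surjective, then H = GL_2(F_p). -/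
open Matrix

section Helpers

variable {F : Type*} [Field F]

private def e12 (t : F) : Matrix (Fin 2) (Fin 2) F := !![1, t; 0, 1]
private def e21 (t : F) : Matrix (Fin 2) (Fin 2) F := !![1, 0; t, 1]

private lemma e12_mul (s t : F) : e12 s * e12 t = e12 (s + t) := by
  simp [e12, Matrix.mul_fin_two]; try ring_nf

private lemma e21_mul (s t : F) : e21 s * e21 t = e21 (s + t) := by
  simp [e21, Matrix.mul_fin_two]; try ring_nf

private def uE12 (t : F) : GL (Fin 2) F :=
  ⟨e12 t, e12 (-t), by rw [e12_mul]; simp [e12, Matrix.one_fin_two],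
    by rw [e12_mul]; simp [e12, Matrix.one_fin_two]⟩

private def uE21 (t : F) : GL (Fin 2) F :=
  ⟨e21 t, e21 (-t), by rw [e21_mul]; simp [e21, Matrix.one_fin_two],
    by rw [e21_mul]; simp [e21, Matrix.one_fin_two]⟩

private lemma uE12_pow (t : F) (n : ℕ) : (uE12 t) ^ n = uE12 ((n : F) * t) := by
  induction n with
  | zero => exact Units.ext (by simp [uE12, e12, Matrix.one_fin_two])
  | succ n ih =>
    rw [pow_succ, ih]
    apply Units.ext
    show e12 ((n : F) * t) * e12 t = e12 (((n : ℕ) + 1 : ℕ) * t)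
    rw [e12_mul]; congr 1; push_cast; ring

private lemma uE21_pow (t : F) (n : ℕ) : (uE21 t) ^ n = uE21 ((n : F) * t) := by
  induction n with
  | zero => exact Units.ext (by simp [uE21, e21, Matrix.one_fin_two])
  | succ n ih =>
    rw [pow_succ, ih]
    apply Units.ext
    show e21 ((n : F) * t) * e21 t = e21 (((n : ℕ) + 1 : ℕ) * t)
    rw [e21_mul]; congr 1; push_cast; ring

private lemma dec (A : Matrix (Fin 2) (Fin 2) F) (hA : A.det = 1) (hc : A 1 0 ≠ 0) :
    A = e12 ((A 0 0 - 1)/(A 1 0)) * e21 (A 1 0) * e12 ((A 1 1 - 1)/(A 1 0)) := by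
  rw [Matrix.det_fin_two] at hA
  ext i j
  fin_cases i <;> fin_cases j <;>
    simp [e12, e21, Matrix.mul_apply, Fin.sum_univ_two] <;>
    field_simp <;>
    first
      | linear_combination hA
      | linear_combination 2*hA
      | linear_combination 3*hA
      | linear_combination -hA
      | ring

private lemma mem_of_c_ne (K : Subgroup (GL (Fin 2) F)) (h12 : ∀ t : F, uE12 t ∈ K)
    (h21 : ∀ t : F, uE21 t ∈ K) (A : GL (Fin 2) F)
    (hA : (↑A : Matrix (Fin 2) (Fin 2) F).det = 1)
    (hc : (↑A : Matrix (Fin 2) (Fin 2) F) 1 0 ≠ 0) : A ∈ K := by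
  obtain ⟨x, y, z, h⟩ : ∃ x y z : F, (↑A : Matrix (Fin 2) (Fin 2) F) = e12 x * e21 y * e12 z :=
    ⟨_, _, _, dec ((↑A : Matrix (Fin 2) (Fin 2) F)) hA hc⟩
  have hAe : A = uE12 x * uE21 y * uE12 z := by
    apply Units.ext
    simpa [uE12, uE21] using h
  rw [hAe]
  exact mul_mem (mul_mem (h12 _) (h21 _)) (h12 _)

private lemma mem_of_det_one (K : Subgroup (GL (Fin 2) F)) (h12 : ∀ t : F, uE12 t ∈ K)
    (h21 : ∀ t : F, uE21 t ∈ K) (A : GL (Fin 2) F)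
    (hA : (↑A : Matrix (Fin 2) (Fin 2) F).det = 1) : A ∈ K := by
  by_cases hc : (↑A : Matrix (Fin 2) (Fin 2) F) 1 0 ≠ 0
  · exact mem_of_c_ne K h12 h21 A hA hc
  push_neg at hc
  have hd : (↑A : Matrix (Fin 2) (Fin 2) F) 1 1 ≠ 0 := by
    intro h11
    rw [Matrix.det_fin_two, hc, h11] at hA
    simp at hA
  have hB : A * uE21 1 ∈ K := by
    apply mem_of_c_ne K h12 h21
    · rw [Units.val_mul]
      rw [Matrix.det_mul, hA]
      simp [uE21, e21, Matrix.det_fin_two]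
    · rw [Units.val_mul]
      simp [uE21, e21, Matrix.mul_apply, Fin.sum_univ_two, hc, hd]
  have hAB : A = (A * uE21 1) * uE21 (-1) := by
    apply Units.ext
    simp only [Units.val_mul, mul_assoc]
    have h1 : (uE21 (1:F) : GL (Fin 2) F).val * (uE21 (-1:F)).val = 1 := by
      show e21 (1:F) * e21 (-1) = 1
      rw [e21_mul]; simp [e21, Matrix.one_fin_two]
    rw [h1, mul_one]
  rw [hAB]
  exact mul_mem hB (h21 _)

private lemma prop_of_det_zero (v w : Fin 2 → F) (hv : v ≠ 0)
    (h : v 0 * w 1 - w 0 * v 1 = 0) : ∃ t : F, w = t • v := by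
  by_cases h0 : v 0 = 0
  · have h1 : v 1 ≠ 0 := by
      intro h1; apply hv; funext i; fin_cases i <;> simp [h0, h1]
    have hw0 : w 0 = 0 := by
      rw [h0] at h; simp at h
      rcases h with h | h
      · exact h
      · exact absurd h h1
    refine ⟨w 1 / v 1, ?_⟩
    funext i; fin_cases i <;> simp [hw0, h0]
    field_simp
  · refine ⟨w 0 / v 0, ?_⟩
    funext i; fin_cases i <;> simp
    · field_simp
    · field_simp
      first
        | linear_combination -h
        | linear_combination 2*h
        | linear_combination h

private lemma mulVec_expand (M : Matrix (Fin 2) (Fin 2) F) (x : Fin 2 → F) :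
    M.mulVec x = x 0 • (fun i => M i 0) + x 1 • (fun i => M i 1) := by
  funext i
  simp [Matrix.mulVec, dotProduct, Fin.sum_univ_two]
  ring

private lemma rank_one (M : Matrix (Fin 2) (Fin 2) F) (hdet : M.det = 0)
    (u : Fin 2 → F) (hu : M.mulVec u ≠ 0) (x : Fin 2 → F) :
    ∃ t : F, M.mulVec x = t • M.mulVec u := by
  rw [Matrix.det_fin_two] at hdet
  set c0 : Fin 2 → F := fun i => M i 0 with hc0
  set c1 : Fin 2 → F := fun i => M i 1 with hc1
  by_cases h0 : c0 = 0
  · have key : ∀ y : Fin 2 → F, M.mulVec y = y 1 • c1 := by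
      intro y; rw [mulVec_expand, ← hc0, ← hc1, h0]; simp
    have hu1 : u 1 ≠ 0 := by
      intro h; apply hu; rw [key, h]; simp
    refine ⟨x 1 / u 1, ?_⟩
    rw [key, key, smul_smul]
    field_simp
  · have hdet' : c0 0 * c1 1 - c1 0 * c0 1 = 0 := by
      simp only [hc0, hc1]; linear_combination hdet
    obtain ⟨s, hs⟩ := prop_of_det_zero c0 c1 h0 hdet'
    have key : ∀ y : Fin 2 → F, M.mulVec y = (y 0 + y 1 * s) • c0 := by
      intro y; rw [mulVec_expand, ← hc0, ← hc1, hs, smul_smul, add_smul]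
      try ring_nf
      try rw [mul_comm (y 1) s]
    have hku : u 0 + u 1 * s ≠ 0 := by
      intro h; apply hu; rw [key, h]; simp
    refine ⟨(x 0 + x 1 * s) / (u 0 + u 1 * s), ?_⟩
    rw [key, key, smul_smul]
    field_simp
    rw [mul_div_cancel_right₀ _ (by rwa [mul_comm s] : u 0 + s * u 1 ≠ 0)]

/-- 2x2 Cayley-Hamilton -/
private lemma sq_fin_two (M : Matrix (Fin 2) (Fin 2) F) :
    M * M = (Matrix.trace M) • M - M.det • (1 : Matrix (Fin 2) (Fin 2) F) := by
  ext i j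
  fin_cases i <;> fin_cases j <;>
    simp [Matrix.mul_apply, Fin.sum_univ_two, Matrix.trace_fin_two, Matrix.det_fin_two,
      Matrix.one_apply] <;> ring

end Helpers

/-- Any subgroup `H` of `GL₂(𝔽ₚ)` (`p ≥ 5` prime) acting irreducibly on `𝔽ₚ²` and containing
an element of order `p` must contain `SL₂(𝔽ₚ)`; if moreover `det : H → 𝔽ₚ^*` is surjective,
then `H = GL₂(𝔽ₚ)`. -/
theorem subgroup_contains_SL2
    (p : ℕ) (hp : p.Prime) (hp5 : 5 ≤ p)
    (H : Subgroup (GL (Fin 2) (ZMod p)))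
    (hirr : ∀ V : Submodule (ZMod p) (Fin 2 → ZMod p),
      (∀ g ∈ H, ∀ v ∈ V, (g : Matrix (Fin 2) (Fin 2) (ZMod p)).mulVec v ∈ V) →
        V = ⊥ ∨ V = ⊤)
    (hordp : ∃ g ∈ H, orderOf g = p) :
    (∀ A : Matrix.SpecialLinearGroup (Fin 2) (ZMod p), A.toGL ∈ H) ∧
      ((∀ u : (ZMod p)ˣ, ∃ g ∈ H, Matrix.GeneralLinearGroup.det g = u) → H = ⊤) := by
  haveI : Fact p.Prime := ⟨hp⟩
  obtain ⟨g, hgH, hgord⟩ := hordp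
  set m : Matrix (Fin 2) (Fin 2) (ZMod p) := ↑g with hm
  have hg1 : g ≠ 1 := by
    intro h; rw [h, orderOf_one] at hgord; omega
  have hmp : m ^ p = 1 := by
    have h1 := pow_orderOf_eq_one g
    rw [hgord] at h1
    have : ((g ^ p : GL (Fin 2) (ZMod p)) : Matrix (Fin 2) (Fin 2) (ZMod p)) = 1 := by
      rw [h1]; rfl
    rwa [Units.val_pow_eq_pow_val] at this
  set N := m - 1 with hN
  have hNp : N ^ p = 0 := by
    rw [hN, sub_pow_char_of_commute p (Commute.one_right m), hmp, one_pow, sub_self]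
  have hNne : N ≠ 0 := by
    intro h
    apply hg1
    apply Units.ext
    rw [hN, sub_eq_zero] at h
    exact h
  have hdetN : N.det = 0 := by
    have h2 : N.det ^ p = 0 := by rw [← Matrix.det_pow, hNp]; simp
    exact pow_eq_zero_iff hp.pos.ne'  |>.mp h2
  have hpow : ∀ k : ℕ, N ^ (k+1) = (Matrix.trace N)^k • N := by
    intro k
    induction k with
    | zero => simp
    | succ k ih =>
      rw [pow_succ, ih, smul_mul_assoc, sq_fin_two, hdetN]
      simp [smul_smul, pow_succ]
  have htr : Matrix.trace N = 0 := by
    have h3 : (Matrix.trace N)^(p-1) • N = 0 := by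
      rw [← hpow, Nat.sub_add_cancel hp.one_lt.le, hNp]
    rcases smul_eq_zero.mp h3 with h | h
    · exact pow_eq_zero_iff (by omega) |>.mp h
    · exact absurd h hNne
  have hNsq : N * N = 0 := by
    rw [sq_fin_two, htr, hdetN]; simp
  -- a nonzero column of N
  obtain ⟨i₀, j₀, hij⟩ : ∃ i j, N i j ≠ 0 := by
    by_contra h; push_neg at h
    exact hNne (by ext i j; simpa using h i j)
  set v : Fin 2 → ZMod p := N.mulVec (Pi.single j₀ 1) with hv
  have hvne : v ≠ 0 := by
    intro h
    apply hij
    have := congrFun h i₀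
    simpa [hv, Matrix.mulVec_single] using this
  have hNv : N.mulVec v = 0 := by
    rw [hv, Matrix.mulVec_mulVec, hNsq, Matrix.zero_mulVec]
  have hmv : m.mulVec v = v := by
    have h4 : m = N + 1 := by rw [hN, sub_add_cancel]
    rw [h4, Matrix.add_mulVec, Matrix.one_mulVec, hNv, zero_add]
  -- the orbit span
  set V : Submodule (ZMod p) (Fin 2 → ZMod p) :=
    Submodule.span (ZMod p)
      {x | ∃ h ∈ H, x = (↑h : Matrix (Fin 2) (Fin 2) (ZMod p)).mulVec v} with hV
  have hVstab : ∀ g' ∈ H, ∀ x ∈ V, (↑g' : Matrix (Fin 2) (Fin 2) (ZMod p)).mulVec x ∈ V := by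
    intro g' hg' x hx
    induction hx using Submodule.span_induction with
    | mem x hxmem =>
      obtain ⟨h, hh, rfl⟩ := hxmem
      rw [Matrix.mulVec_mulVec, ← Units.val_mul]
      exact Submodule.subset_span ⟨g' * h, mul_mem hg' hh, rfl⟩
    | zero => rw [Matrix.mulVec_zero]; exact Submodule.zero_mem _
    | add x y hx hy ihx ihy => rw [Matrix.mulVec_add]; exact Submodule.add_mem _ ihx ihy
    | smul a x hx ihx => rw [Matrix.mulVec_smul]; exact Submodule.smul_mem _ _ ihx
  have hvV : v ∈ V := Submodule.subset_span ⟨1, one_mem H, by rw [Units.val_one, Matrix.one_mulVec]⟩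
  have hVtop : V = ⊤ := by
    rcases hirr V hVstab with h | h
    · exfalso; apply hvne; simpa [h] using hvV
    · exact h
  -- find h ∈ H moving v out of its line
  obtain ⟨h, hhH, hw⟩ : ∃ h ∈ H,
      (↑h : Matrix (Fin 2) (Fin 2) (ZMod p)).mulVec v ∉ Submodule.span (ZMod p) {v} := by
    by_contra hcon; push_neg at hcon
    have hle : V ≤ Submodule.span (ZMod p) {v} := by
      rw [hV]; apply Submodule.span_le.mpr
      rintro x ⟨h', hh', rfl⟩
      exact hcon h' hh'
    rw [hVtop] at hle
    have h1 : Submodule.span (ZMod p) {v} = ⊤ := top_le_iff.mp hle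
    have h2 : Module.finrank (ZMod p) (Submodule.span (ZMod p) {v}) = 1 :=
      finrank_span_singleton hvne
    rw [h1, finrank_top] at h2
    have h3 : Module.finrank (ZMod p) (Fin 2 → ZMod p) = 2 := by
      simp [Module.finrank_pi]
    omega
  set hmm : Matrix (Fin 2) (Fin 2) (ZMod p) := ↑h with hhm
  set w : Fin 2 → ZMod p := hmm.mulVec v with hwdef
  have hwne : w ≠ 0 := by
    intro h0
    exact hw (by rw [h0]; exact Submodule.zero_mem _)
  -- the basis matrix P
  set P : Matrix (Fin 2) (Fin 2) (ZMod p) := !![v 0, w 0; v 1, w 1] with hP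
  have hdP : P.det ≠ 0 := by
    intro h0
    rw [hP, Matrix.det_fin_two_of] at h0
    obtain ⟨t, ht⟩ := prop_of_det_zero v w hvne h0
    exact hw (by rw [ht]; exact Submodule.smul_mem _ _ (Submodule.mem_span_singleton_self v))
  obtain ⟨Pu, hPu⟩ : IsUnit P := (Matrix.isUnit_iff_isUnit_det P).2 (Ne.isUnit hdP)
  have hinv : hmm * (↑h⁻¹ : Matrix (Fin 2) (Fin 2) (ZMod p)) = 1 := by
    rw [hhm, ← Units.val_mul, mul_inv_cancel, Units.val_one]
  have hinv2 : (↑h⁻¹ : Matrix (Fin 2) (Fin 2) (ZMod p)) * hmm = 1 := by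
    rw [hhm, ← Units.val_mul, inv_mul_cancel, Units.val_one]
  -- N •w = c • v with c ≠ 0
  have hvne' : N.mulVec (Pi.single j₀ 1) ≠ 0 := by rw [← hv]; exact hvne
  obtain ⟨c, hc⟩ := rank_one N hdetN (Pi.single j₀ 1) hvne' w
  rw [← hv] at hc
  have hNPzero : ∀ (M : Matrix (Fin 2) (Fin 2) (ZMod p)),
      M.mulVec v = 0 → M.mulVec w = 0 → M = 0 := by
    intro M h1 h2
    have hMP : M * P = 0 := by
      ext i k
      fin_cases k
      · have h3 := congrFun h1 i
        simpa [hP, Matrix.mul_apply, Matrix.mulVec, dotProduct, Fin.sum_univ_two]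
          using h3
      · have h3 := congrFun h2 i
        simpa [hP, Matrix.mul_apply, Matrix.mulVec, dotProduct, Fin.sum_univ_two]
          using h3
    have h4 : M * P * (↑Pu⁻¹ : Matrix (Fin 2) (Fin 2) (ZMod p)) = M := by
      rw [← hPu]; exact Units.mul_inv_cancel_right M Pu
    rw [← h4, hMP, zero_mul]
  have hcne : c ≠ 0 := by
    intro h0
    rw [h0, zero_smul] at hc
    exact hNne (hNPzero N hNv hc)
  -- conjugation sends g to the elementary matrix uE12 c
  have hmw : m.mulVec w = c • v + w := by
    have h4 : m = N + 1 := by rw [hN, sub_add_cancel]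
    rw [h4, Matrix.add_mulVec, Matrix.one_mulVec, hc]
  have hcol : m * P = P * e12 c := by
    have c0 : ∀ i, m i 0 * v 0 + m i 1 * v 1 = v i := by
      intro i; have h3 := congrFun hmv i
      simpa [Matrix.mulVec, dotProduct, Fin.sum_univ_two] using h3
    have c1 : ∀ i, m i 0 * w 0 + m i 1 * w 1 = c * v i + w i := by
      intro i; have h3 := congrFun hmw i
      simpa [Matrix.mulVec, dotProduct, Fin.sum_univ_two] using h3
    ext i k
    fin_cases i <;> fin_cases k <;>
      simp [hP, e12, Matrix.mul_apply, Fin.sum_univ_two] <;>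
      first
        | linear_combination c0 0
        | linear_combination c0 1
        | linear_combination c1 0
        | linear_combination c1 1
  set φ := MulAut.conj Pu with hφ
  have hg_eq : g = φ (uE12 c) := by
    apply Units.ext
    rw [hφ, MulAut.conj_apply]
    rw [Units.val_mul, Units.val_mul]
    have h5 : (↑g : Matrix (Fin 2) (Fin 2) (ZMod p)) * (↑Pu : Matrix (Fin 2) (Fin 2) (ZMod p))
        = (↑Pu : Matrix (Fin 2) (Fin 2) (ZMod p)) * (uE12 c : GL (Fin 2) (ZMod p)).val := by
      rw [hPu]; exact hcol
    calc (↑g : Matrix (Fin 2) (Fin 2) (ZMod p))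
        = ((↑g : Matrix (Fin 2) (Fin 2) (ZMod p)) * (↑Pu : Matrix (Fin 2) (Fin 2) (ZMod p)))
            * (↑Pu⁻¹ : Matrix (Fin 2) (Fin 2) (ZMod p)) := (Units.mul_inv_cancel_right _ _).symm
      _ = ((↑Pu : Matrix (Fin 2) (Fin 2) (ZMod p)) * (uE12 c : GL (Fin 2) (ZMod p)).val)
            * (↑Pu⁻¹ : Matrix (Fin 2) (Fin 2) (ZMod p)) := by rw [h5]
  have key12 : ∀ t : ZMod p, φ (uE12 t) ∈ H := by
    intro t
    have h5 : g ^ (t * c⁻¹).val = φ (uE12 t) := by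
      rw [hg_eq, ← map_pow, uE12_pow]
      congr 2
      rw [ZMod.natCast_val, ZMod.cast_id]
      field_simp
    rw [← h5]; exact pow_mem hgH _
  -- the second unipotent
  set g2 : GL (Fin 2) (ZMod p) := h * g * h⁻¹ with hg2
  have hg2H : g2 ∈ H := mul_mem (mul_mem hhH hgH) (inv_mem hhH)
  have hm2eq : (↑g2 : Matrix (Fin 2) (Fin 2) (ZMod p))
      = hmm * m * (↑h⁻¹ : Matrix (Fin 2) (Fin 2) (ZMod p)) := by
    rw [hg2, Units.val_mul, Units.val_mul, hhm, hm]
  set N2 : Matrix (Fin 2) (Fin 2) (ZMod p) := (↑g2 : Matrix (Fin 2) (Fin 2) (ZMod p)) - 1 with hN2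
  have hN2eq : N2 = hmm * N * (↑h⁻¹ : Matrix (Fin 2) (Fin 2) (ZMod p)) := by
    rw [hN2, hm2eq, hN, mul_sub, mul_one, sub_mul, hinv]
  have hdetN2 : N2.det = 0 := by
    rw [hN2eq, Matrix.det_mul, Matrix.det_mul, hdetN, mul_zero, zero_mul]
  have hN2w : N2.mulVec w = 0 := by
    rw [hN2eq, hwdef, Matrix.mulVec_mulVec, mul_assoc (hmm * N), hinv2, mul_one,
      ← Matrix.mulVec_mulVec, hNv, Matrix.mulVec_zero]
  have hN2u : N2.mulVec (hmm.mulVec (Pi.single j₀ 1)) = w := by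
    rw [hN2eq, Matrix.mulVec_mulVec, mul_assoc (hmm * N), hinv2, mul_one,
      ← Matrix.mulVec_mulVec, ← hv, hwdef]
  have hN2une : N2.mulVec (hmm.mulVec (Pi.single j₀ 1)) ≠ 0 := by rw [hN2u]; exact hwne
  obtain ⟨d, hd⟩ := rank_one N2 hdetN2 _ hN2une v
  rw [hN2u] at hd
  have hdne : d ≠ 0 := by
    intro h0
    rw [h0, zero_smul] at hd
    have h9 : N2 = 0 := hNPzero N2 hd hN2w
    rw [h9, Matrix.zero_mulVec] at hN2u
    exact hwne hN2u.symm
  have hm2v : (↑g2 : Matrix (Fin 2) (Fin 2) (ZMod p)).mulVec v = d • w + v := by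
    have h4 : (↑g2 : Matrix (Fin 2) (Fin 2) (ZMod p)) = N2 + 1 := by rw [hN2, sub_add_cancel]
    rw [h4, Matrix.add_mulVec, Matrix.one_mulVec, hd]
  have hm2w : (↑g2 : Matrix (Fin 2) (Fin 2) (ZMod p)).mulVec w = w := by
    have h4 : (↑g2 : Matrix (Fin 2) (Fin 2) (ZMod p)) = N2 + 1 := by rw [hN2, sub_add_cancel]
    rw [h4, Matrix.add_mulVec, Matrix.one_mulVec, hN2w, zero_add]
  have hcol2 : (↑g2 : Matrix (Fin 2) (Fin 2) (ZMod p)) * P = P * e21 d := by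
    set m2 : Matrix (Fin 2) (Fin 2) (ZMod p) := (↑g2 : Matrix (Fin 2) (Fin 2) (ZMod p)) with hm2
    have c0 : ∀ i, m2 i 0 * v 0 + m2 i 1 * v 1 = d * w i + v i := by
      intro i; have h3 := congrFun hm2v i
      simpa [Matrix.mulVec, dotProduct, Fin.sum_univ_two] using h3
    have c1 : ∀ i, m2 i 0 * w 0 + m2 i 1 * w 1 = w i := by
      intro i; have h3 := congrFun hm2w i
      simpa [Matrix.mulVec, dotProduct, Fin.sum_univ_two] using h3
    ext i k
    fin_cases i <;> fin_cases k <;>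
      simp [hP, e21, Matrix.mul_apply, Fin.sum_univ_two] <;>
      first
        | linear_combination c0 0
        | linear_combination c0 1
        | linear_combination c1 0
        | linear_combination c1 1
  have hg2_eq : g2 = φ (uE21 d) := by
    apply Units.ext
    rw [hφ, MulAut.conj_apply]
    rw [Units.val_mul, Units.val_mul]
    have h5 : (↑g2 : Matrix (Fin 2) (Fin 2) (ZMod p)) * (↑Pu : Matrix (Fin 2) (Fin 2) (ZMod p))
        = (↑Pu : Matrix (Fin 2) (Fin 2) (ZMod p)) * (uE21 d : GL (Fin 2) (ZMod p)).val := by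
      rw [hPu]; exact hcol2
    calc (↑g2 : Matrix (Fin 2) (Fin 2) (ZMod p))
        = ((↑g2 : Matrix (Fin 2) (Fin 2) (ZMod p)) * (↑Pu : Matrix (Fin 2) (Fin 2) (ZMod p)))
            * (↑Pu⁻¹ : Matrix (Fin 2) (Fin 2) (ZMod p)) := (Units.mul_inv_cancel_right _ _).symm
      _ = ((↑Pu : Matrix (Fin 2) (Fin 2) (ZMod p)) * (uE21 d : GL (Fin 2) (ZMod p)).val)
            * (↑Pu⁻¹ : Matrix (Fin 2) (Fin 2) (ZMod p)) := by rw [h5]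
  have key21 : ∀ t : ZMod p, φ (uE21 t) ∈ H := by
    intro t
    have h5 : g2 ^ (t * d⁻¹).val = φ (uE21 t) := by
      rw [hg2_eq, ← map_pow, uE21_pow]
      congr 2
      rw [ZMod.natCast_val, ZMod.cast_id]
      field_simp
    rw [← h5]; exact pow_mem hg2H _
  -- conclusion
  have main1 : ∀ A : Matrix.SpecialLinearGroup (Fin 2) (ZMod p), A.toGL ∈ H := by
    intro A
    set K : Subgroup (GL (Fin 2) (ZMod p)) := H.comap φ.toMonoidHom with hK
    have h12 : ∀ t : ZMod p, uE12 t ∈ K := fun t => Subgroup.mem_comap.mpr (key12 t)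
    have h21 : ∀ t : ZMod p, uE21 t ∈ K := fun t => Subgroup.mem_comap.mpr (key21 t)
    have h7 : ((A.toGL : GL (Fin 2) (ZMod p)) : Matrix (Fin 2) (Fin 2) (ZMod p)).det = 1 :=
      A.det_coe
    have h6 : ((↑(Pu⁻¹) : Matrix (Fin 2) (Fin 2) (ZMod p))).det
        * ((↑Pu : Matrix (Fin 2) (Fin 2) (ZMod p))).det = 1 := by
      rw [← Matrix.det_mul, ← Units.val_mul, inv_mul_cancel, Units.val_one, Matrix.det_one]
    have hdetB : ((↑(Pu⁻¹ * A.toGL * Pu) : Matrix (Fin 2) (Fin 2) (ZMod p))).det = 1 := by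
      rw [Units.val_mul, Units.val_mul, Matrix.det_mul, Matrix.det_mul, h7, mul_one, h6]
    have hBK : Pu⁻¹ * A.toGL * Pu ∈ K := mem_of_det_one K h12 h21 _ hdetB
    have h8 : φ (Pu⁻¹ * A.toGL * Pu) ∈ H := hBK
    rw [hφ, MulAut.conj_apply] at h8
    have h9 : Pu * (Pu⁻¹ * A.toGL * Pu) * Pu⁻¹ = A.toGL := by group
    rwa [h9] at h8
  refine ⟨main1, fun hsurj => ?_⟩
  rw [Subgroup.eq_top_iff']
  intro x
  obtain ⟨h', hh'H, hdet'⟩ := hsurj (Matrix.GeneralLinearGroup.det x)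
  have hdetval : ((↑h' : Matrix (Fin 2) (Fin 2) (ZMod p))).det
      = ((↑x : Matrix (Fin 2) (Fin 2) (ZMod p))).det := by
    have h3 := congrArg Units.val hdet'
    simpa [Matrix.GeneralLinearGroup.val_det_apply] using h3
  have hd1 : ((↑(x * h'⁻¹) : Matrix (Fin 2) (Fin 2) (ZMod p))).det = 1 := by
    rw [Units.val_mul, Matrix.det_mul, ← hdetval, ← Matrix.det_mul, ← Units.val_mul,
      mul_inv_cancel, Units.val_one, Matrix.det_one]
  set A : Matrix.SpecialLinearGroup (Fin 2) (ZMod p) := ⟨↑(x * h'⁻¹), hd1⟩ with hA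
  have hAgl : A.toGL = x * h'⁻¹ := Units.ext rfl
  have hxh : x * h'⁻¹ ∈ H := hAgl ▸ main1 A
  have hfin : (x * h'⁻¹) * h' ∈ H := mul_mem hxh hh'H
  rwa [inv_mul_cancel_right] at hfin
end
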